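/- arXiv:2601.07503 — 8 statements merged into one kernel-verified Lean document; each statement's English description precedes it below -/
import Mathlib

section
/- With the notation of the context, for every θ = (α,β) ∈ Θ and all (x,y) ∈ E × E, the deviation satisfies Δ(θ,x,y) = c₁(θ*,θ)·(G⁰ − F⁰⊗F⁰)(x,y) + c₂(θ*,θ)·((F¹−F⁰)⊗(F¹−F⁰))(x,y), where c₁(θ*,θ) = −2r* + r*b* + 2r − rb and c₂(θ*,θ) = (r*/r)(b*r − r*b). -/
set_option maxHeartbeats 1000000



private lemma key_decomp (G0v F0x F0y F1x F1y t1 t2 t3 t4 m1 m2 m3 m4 A K c1 c2 : ℝ)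
    (e1 : t1 - m1 = c1) (e2 : m2*A + m3*A + m4*A*A = c1 - c2)
    (e3 : t2 - m2*K - m4*A*K = -c2) (e4 : t3 - m3*K - m4*A*K = -c2)
    (e5 : t4 - m4*K*K = c2) :
    t1*G0v + t2*F0x*F1y + t3*F1x*F0y + t4*F1x*F1y
      - (m1*G0v + m2*F0x*(A*F0y+K*F1y) + m3*(A*F0x+K*F1x)*F0y
          + m4*(A*F0x+K*F1x)*(A*F0y+K*F1y))
      = c1*(G0v - F0x*F0y) + c2*((F1x-F0x)*(F1y-F0y)) := by
  linear_combination G0v * e1 - (F0x*F0y) * e2 + (F0x*F1y) * e3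
    + (F1x*F0y) * e4 + (F1x*F1y) * e5

/-- Proposition 1 (decomposition part): the deviation Δ(θ,·) decomposes as
    c₁(θ*,θ)·(G⁰ − F⁰⊗F⁰) + c₂(θ*,θ)·((F¹−F⁰)⊗(F¹−F⁰)). -/
theorem deviation_decomposition
    {E : Type*} (δ : ℝ) (hδ0 : 0 < δ) (hδ : δ < 1/2)
    (α β αs βs : ℝ)
    (hα : α ∈ Set.Icc δ (1-δ)) (hβ : β ∈ Set.Icc δ (1-δ))
    (hαs : αs ∈ Set.Icc δ (1-δ)) (hβs : βs ∈ Set.Icc δ (1-δ))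
    (F0 F1 : E → ℝ) (G0 : E × E → ℝ)
    (p r b : ℝ) (hp : p = β/(α+β)) (hr : r = α/(α+β)) (hb : b = 1-β)
    (l1 l2 l3 l4 : ℝ)
    (hl1 : l1 = β*(1-α)/(α+β)) (hl2 : l2 = α*β/(α+β))
    (hl3 : l3 = α*β/(α+β)) (hl4 : l4 = α*(1-β)/(α+β))
    (ps rs bs : ℝ) (hps : ps = βs/(αs+βs)) (hrs : rs = αs/(αs+βs)) (hbs : bs = 1-βs)
    (ls1 ls2 ls3 ls4 : ℝ)
    (hls1 : ls1 = βs*(1-αs)/(αs+βs)) (hls2 : ls2 = αs*βs/(αs+βs))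
    (hls3 : ls3 = αs*βs/(αs+βs)) (hls4 : ls4 = αs*(1-βs)/(αs+βs))
    (F : E → ℝ) (hF : ∀ x, F x = ps * F0 x + rs * F1 x)
    (G : E × E → ℝ)
    (hG : ∀ x y, G (x,y) = ls1 * G0 (x,y) + ls2 * F0 x * F1 y
        + ls3 * F1 x * F0 y + ls4 * F1 x * F1 y)
    (F1θ : E → ℝ) (hF1θ : ∀ x, F1θ x = (F x - p * F0 x)/r)
    (Δ : E → E → ℝ)
    (hΔ : ∀ x y, Δ x y = G (x,y) - (l1 * G0 (x,y) + l2 * F0 x * F1θ y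
        + l3 * F1θ x * F0 y + l4 * F1θ x * F1θ y))
    (c1 c2 : ℝ)
    (hc1 : c1 = -2*rs + rs*bs + 2*r - r*b)
    (hc2 : c2 = (rs/r)*(bs*r - rs*b)) :
    ∀ x y : E, Δ x y = c1 * (G0 (x,y) - F0 x * F0 y)
      + c2 * ((F1 x - F0 x) * (F1 y - F0 y)) := by
  have hαβ : (0:ℝ) < α + β := by have := hα.1; have := hβ.1; linarith
  have hαsβs : (0:ℝ) < αs + βs := by have := hαs.1; have := hβs.1; linarith
  have h1 : α + β ≠ 0 := ne_of_gt hαβ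
  have h2 : αs + βs ≠ 0 := ne_of_gt hαsβs
  have h3 : α ≠ 0 := by have := hα.1; linarith
  have hr0 : r ≠ 0 := by rw [hr]; exact div_ne_zero h3 h1
  have hu : ∀ x, F1θ x = ((ps - p)/r) * F0 x + (rs/r) * F1 x := by
    intro x; rw [hF1θ, hF]; ring
  have hAeq : (ps - p)/r = (βs*(α+β) - β*(αs+βs)) / (α*(αs+βs)) := by
    rw [div_eq_div_iff hr0 (mul_ne_zero h3 h2), hps, hp, hr]
    field_simp
  have hKeq : rs/r = (αs*(α+β)) / (α*(αs+βs)) := by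
    rw [div_eq_div_iff hr0 (mul_ne_zero h3 h2), hrs, hr]
    field_simp
  have e1 : ls1 - l1 = c1 := by
    rw [hls1, hl1, hc1, hrs, hbs, hr, hb]; field_simp; ring
  have e2 : l2*((ps - p)/r) + l3*((ps - p)/r) + l4*((ps - p)/r)*((ps - p)/r) = c1 - c2 := by
    rw [hc2, hKeq, hAeq, hl2, hl3, hl4, hc1, hrs, hbs, hr, hb]
    field_simp; ring
  have e3 : ls2 - l2*(rs/r) - l4*((ps - p)/r)*(rs/r) = -c2 := by
    rw [hc2, hKeq, hAeq, hls2, hl2, hl4, hrs, hbs, hr, hb]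
    field_simp; ring
  have e4 : ls3 - l3*(rs/r) - l4*((ps - p)/r)*(rs/r) = -c2 := by
    rw [hc2, hKeq, hAeq, hls3, hl3, hl4, hrs, hbs, hr, hb]
    field_simp; ring
  have e5 : ls4 - l4*(rs/r)*(rs/r) = c2 := by
    rw [hc2, hKeq, hls4, hl4, hrs, hbs, hr, hb]
    field_simp
  intro x y
  have := key_decomp (G0 (x,y)) (F0 x) (F0 y) (F1 x) (F1 y)
    ls1 ls2 ls3 ls4 l1 l2 l3 l4 ((ps - p)/r) (rs/r) c1 c2 e1 e2 e3 e4 e5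
  rw [hΔ, hG, hu, hu]
  linarith [this]
end

section
/- Let 0 < δ < 1/2 and let (α,β), (α*,β*) ∈ [δ, 1−δ]². Set r = α/(α+β), b = 1−β, r* = α*/(α*+β*), b* = 1−β*, and define c₁ = −2r* + r*b* + 2r − rb and c₂ = (r*/r)(b*r − r*b). If c₁ = 0 and c₂ = 0, then (α,β) = (α*,β*). -/
/-- Proposition 1 (identifiability part): vanishing of c₁ and c₂ forces θ = θ*. -/
theorem c1_c2_zero_implies_eq
    (δ α β αs βs : ℝ) (hδ0 : 0 < δ) (hδ : δ < 1/2)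
    (hα : α ∈ Set.Icc δ (1-δ)) (hβ : β ∈ Set.Icc δ (1-δ))
    (hαs : αs ∈ Set.Icc δ (1-δ)) (hβs : βs ∈ Set.Icc δ (1-δ))
    (r b rs bs c1 c2 : ℝ)
    (hr : r = α/(α+β)) (hb : b = 1-β)
    (hrs : rs = αs/(αs+βs)) (hbs : bs = 1-βs)
    (hc1 : c1 = -2*rs + rs*bs + 2*r - r*b)
    (hc2 : c2 = (rs/r)*(bs*r - rs*b))
    (h1 : c1 = 0) (h2 : c2 = 0) :
    (α, β) = (αs, βs) := by
  obtain ⟨hα1, hα2⟩ := hα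
  obtain ⟨hβ1, hβ2⟩ := hβ
  obtain ⟨hαs1, hαs2⟩ := hαs
  obtain ⟨hβs1, hβs2⟩ := hβs
  have hαβ : 0 < α + β := by linarith
  have hαβs : 0 < αs + βs := by linarith
  have hrpos : 0 < r := by rw [hr]; exact div_pos (by linarith) hαβ
  have hrspos : 0 < rs := by rw [hrs]; exact div_pos (by linarith) hαβs
  have hbpos : 0 < b := by rw [hb]; linarith
  have hbspos : 0 < bs := by rw [hbs]; linarith
  have e1 : -2*rs + rs*bs + 2*r - r*b = 0 := by rw [← hc1]; exact h1
  have e2 : bs*r - rs*b = 0 := by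
    have h2' : (rs/r)*(bs*r - rs*b) = 0 := by rw [← hc2]; exact h2
    rcases mul_eq_zero.mp h2' with h | h
    · exact absurd h (ne_of_gt (div_pos hrspos hrpos))
    · exact h
  have hfac : r * ((bs - b) * (2 - b - bs)) = 0 := by
    linear_combination (2 - bs) * e2 - b * e1
  have hbb : bs = b := by
    rcases mul_eq_zero.mp hfac with h | h
    · exact absurd h (ne_of_gt hrpos)
    · rcases mul_eq_zero.mp h with h' | h'
      · linarith
      · exfalso; rw [hb, hbs] at h'; linarith
  have hββ : β = βs := by rw [hb, hbs] at hbb; linarith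
  have hrr : r = rs := by
    have : bs * (r - rs) = 0 := by linear_combination e2 - rs * hbb
    rcases mul_eq_zero.mp this with h | h
    · exact absurd h (ne_of_gt hbspos)
    · linarith
  have hαα : α = αs := by
    rw [hr, hrs, ← hββ] at hrr
    rw [div_eq_div_iff hαβ.ne' (by intro h; nlinarith : αs + β ≠ 0)] at hrr
    nlinarith
  rw [hαα, hββ]
end

section
/- Assume that the two functions T₁ = G⁰ − F⁰⊗F⁰ and T₂' = (F¹−F⁰)⊗(F¹−F⁰) are linearly independent in the real vector space of functions E × E → ℝ. Then for every θ ∈ Θ: Δ(θ,x,y) = 0 for all (x,y) ∈ E × E if and only if θ = θ*. Equivalently, the sup-discrepancy s(θ) = sup_{(x,y)} |Δ(θ,x,y)| vanishes if and only if θ = θ*. -/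
set_option maxHeartbeats 1000000


/-- Under linear independence of G⁰ − F⁰⊗F⁰ and (F¹−F⁰)⊗(F¹−F⁰), the deviation
    Δ(θ,·) vanishes identically iff θ = θ*. -/
theorem deviation_zero_iff_of_linearIndependent
    {E : Type*} (δ : ℝ) (hδ0 : 0 < δ) (hδ : δ < 1/2)
    (F0 F1 : E → ℝ) (G0 : E × E → ℝ)
    (αs βs : ℝ) (hαs : αs ∈ Set.Icc δ (1-δ)) (hβs : βs ∈ Set.Icc δ (1-δ))
    (F : E → ℝ) (hF : ∀ x, F x = (βs/(αs+βs)) * F0 x + (αs/(αs+βs)) * F1 x)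
    (G : E × E → ℝ)
    (hG : ∀ x y, G (x,y) = (βs*(1-αs)/(αs+βs)) * G0 (x,y)
        + (αs*βs/(αs+βs)) * F0 x * F1 y
        + (αs*βs/(αs+βs)) * F1 x * F0 y
        + (αs*(1-βs)/(αs+βs)) * F1 x * F1 y)
    (F1θ : ℝ × ℝ → E → ℝ)
    (hF1θ : ∀ (α β : ℝ) (x : E),
      F1θ (α, β) x = (F x - (β/(α+β)) * F0 x) / (α/(α+β)))
    (Δ : ℝ × ℝ → E × E → ℝ)
    (hΔ : ∀ (α β : ℝ) (x y : E),
      Δ (α, β) (x, y) = G (x,y) - ((β*(1-α)/(α+β)) * G0 (x,y)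
        + (α*β/(α+β)) * F0 x * F1θ (α, β) y
        + (α*β/(α+β)) * F1θ (α, β) x * F0 y
        + (α*(1-β)/(α+β)) * F1θ (α, β) x * F1θ (α, β) y))
    (hLinInd : LinearIndependent ℝ
      ![fun z : E × E => G0 z - F0 z.1 * F0 z.2,
        fun z : E × E => (F1 z.1 - F0 z.1) * (F1 z.2 - F0 z.2)]) :
    ∀ θ ∈ Set.Icc δ (1-δ) ×ˢ Set.Icc δ (1-δ),
      ((∀ z : E × E, Δ θ z = 0) ↔ θ = (αs, βs)) := by
  rintro ⟨α, β⟩ ⟨hα, hβ⟩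
  have hα0 : 0 < α := lt_of_lt_of_le hδ0 hα.1
  have hβ0 : 0 < β := lt_of_lt_of_le hδ0 hβ.1
  have hαs0 : 0 < αs := lt_of_lt_of_le hδ0 hαs.1
  have hβs0 : 0 < βs := lt_of_lt_of_le hδ0 hβs.1
  have hS : (0:ℝ) < α + β := by linarith
  have hSs : (0:ℝ) < αs + βs := by linarith
  have hSne : α + β ≠ 0 := ne_of_gt hS
  have hSsne : αs + βs ≠ 0 := ne_of_gt hSs
  have hαne : α ≠ 0 := ne_of_gt hα0
  have hαsne : αs ≠ 0 := ne_of_gt hαs0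
  have hβsne : βs ≠ 0 := ne_of_gt hβs0
  -- pointwise decomposition of the deviation
  have key : ∀ x y : E, Δ (α, β) (x, y)
      = (βs*(1-αs)/(αs+βs) - β*(1-α)/(α+β)) * (G0 (x,y) - F0 x * F0 y)
      + (αs*(1-βs)/(αs+βs) - (1-β)*αs^2*(α+β)/((αs+βs)^2*α))
        * ((F1 x - F0 x) * (F1 y - F0 y)) := by
    intro x y
    rw [hΔ, hG, hF1θ, hF1θ, hF x, hF y]
    field_simp
    ring
  constructor
  · intro h0
    -- the two coefficients vanish
    have hfun : (βs*(1-αs)/(αs+βs) - β*(1-α)/(α+β))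
          • (fun z : E × E => G0 z - F0 z.1 * F0 z.2)
        + (αs*(1-βs)/(αs+βs) - (1-β)*αs^2*(α+β)/((αs+βs)^2*α))
          • (fun z : E × E => (F1 z.1 - F0 z.1) * (F1 z.2 - F0 z.2)) = 0 := by
      funext z
      obtain ⟨x, y⟩ := z
      have hk := key x y
      have hz := h0 (x, y)
      simp only [Pi.add_apply, Pi.smul_apply, smul_eq_mul, Pi.zero_apply]
      rw [hz] at hk
      linarith [hk]
    obtain ⟨hA, hB⟩ := hLinInd.eq_zero_of_pair hfun
    -- clear denominators
    have h1 : βs*(1-αs)*(α+β) = β*(1-α)*(αs+βs) := by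
      have h := hA
      field_simp at h
      linear_combination h
    have h2 : αs*(1-β)*(α+β) = (1-βs)*(αs+βs)*α := by
      have h := hB
      field_simp at h
      refine mul_left_cancel₀ (mul_ne_zero hαsne hSsne) ?_
      linear_combination -(αs+βs)*h
    have hprod : (α*βs - αs*β) * (β + βs) = 0 := by
      linear_combination h1 + h2
    have e1 : α*βs - αs*β = 0 := by
      rcases mul_eq_zero.1 hprod with h | h
      · exact h
      · exfalso; linarith
    have hb : β = βs := by
      have h3 : αs*(α+β)*(1-β) = αs*(α+β)*(1-βs) := by
        linear_combination h2 + (1-βs)*e1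
      have h4 : (1:ℝ) - β = 1 - βs :=
        mul_left_cancel₀ (by positivity) h3
      linarith
    have ha : α = αs := by
      have : α * βs = αs * βs := by rw [hb] at e1; linarith
      exact mul_right_cancel₀ hβsne this
    rw [Prod.mk.injEq]
    exact ⟨ha, hb⟩
  · intro h
    rw [Prod.mk.injEq] at h
    obtain ⟨rfl, rfl⟩ := h
    intro z
    obtain ⟨x, y⟩ := z
    rw [key x y]
    field_simp
    ring
end

section
/- Assume F⁰ and F̂ take values in [0,1] and G⁰ takes values in [0,1]. Then for all θ = (α,β) and θ' = (α',β') in Θ = [δ,1−δ]² and all (x,y) ∈ E × E, |Δₙ(θ,x,y) − Δₙ(θ',x,y)| ≤ 2δ⁻³ (|α−α'| + |β−β'|). -/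
lemma mul_diff_abs (p p' q q' : ℝ) : |p*q - p'*q'| ≤ |p-p'| * |q| + |p'| * |q-q'| := by
  have h : p*q - p'*q' = (p-p')*q + p'*(q-q') := by ring
  rw [h]
  exact (abs_add_le _ _).trans (by rw [abs_mul, abs_mul])

lemma mul3_diff_abs (p p' q q' r r' : ℝ) :
    |p*q*r - p'*q'*r'| ≤ |p-p'| * |q| * |r| + |p'| * |q-q'| * |r| + |p'| * |q'| * |r-r'| := by
  have h : p*q*r - p'*q'*r' = (p-p')*q*r + p'*(q-q')*r + p'*q'*(r-r') := by ring
  rw [h]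
  calc |(p-p')*q*r + p'*(q-q')*r + p'*q'*(r-r')|
      ≤ |(p-p')*q*r + p'*(q-q')*r| + |p'*q'*(r-r')| := abs_add_le _ _
    _ ≤ |(p-p')*q*r| + |p'*(q-q')*r| + |p'*q'*(r-r')| :=
        add_le_add (abs_add_le _ _) le_rfl
    _ = |p-p'| * |q| * |r| + |p'| * |q-q'| * |r| + |p'| * |q'| * |r-r'| := by
        rw [abs_mul, abs_mul, abs_mul, abs_mul, abs_mul, abs_mul]

lemma quot_diff_abs (n n' d1 d2 : ℝ) (h1 : 0 < d1) (h2 : 0 < d2) :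
    |n/d1 - n'/d2| ≤ |n-n'|/d1 + |n'| * |d1-d2|/(d1*d2) := by
  have key : n/d1 - n'/d2 = (n-n')/d1 + n'*(d2-d1)/(d1*d2) := by
    field_simp
    ring
  rw [key]
  calc |(n-n')/d1 + n'*(d2-d1)/(d1*d2)| ≤ |(n-n')/d1| + |n'*(d2-d1)/(d1*d2)| := abs_add_le _ _
    _ = |n-n'|/d1 + |n'| * |d1-d2|/(d1*d2) := by
        rw [abs_div, abs_div, abs_mul, abs_of_pos h1, abs_of_pos (mul_pos h1 h2),
          abs_sub_comm d2 d1]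

lemma prod3_le {a b c A B C : ℝ} (ha0 : 0 ≤ a) (hb0 : 0 ≤ b) (hc0 : 0 ≤ c)
    (h1 : a ≤ A) (h2 : b ≤ B) (h3 : c ≤ C) : a*b*c ≤ A*B*C := by
  have hA : 0 ≤ A := ha0.trans h1
  have hB : 0 ≤ B := hb0.trans h2
  exact mul_le_mul (mul_le_mul h1 h2 hb0 hA) h3 hc0 (mul_nonneg hA hB)

lemma abs_add5 (a b c d e : ℝ) : |a+b+c+d+e| ≤ |a|+|b|+|c|+|d|+|e| := by
  calc |a+b+c+d+e| ≤ |a+b+c+d| + |e| := abs_add_le _ _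
    _ ≤ (|a+b+c| + |d|) + |e| := add_le_add (abs_add_le _ _) le_rfl
    _ ≤ ((|a+b| + |c|) + |d|) + |e| := by
        have := abs_add_le (a+b) c
        linarith
    _ ≤ (((|a| + |b|) + |c|) + |d|) + |e| := by
        have := abs_add_le a b
        linarith


set_option maxHeartbeats 1000000 in
lemma Kbound (δ : ℝ) (hδ0 : 0 < δ) (hδ : δ < 1/2) :
    ((1-δ)/(2*δ) + (1-δ)^2/(4*δ^2))
      + 2*((2-3*δ)/δ + (1-δ)*(1-2*δ)/δ^2)
      + ((3-3*δ)/δ + 2*(1-δ)^2/δ^2)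
      + ((1/δ + (1-δ)/δ^2)*(1-δ)*(1-2*δ)
        + ((1-δ)/δ)*(1/(2*δ) + (1-δ)/(4*δ^2))*(1-2*δ)
        + ((1-δ)/δ)*(1-δ))
      + ((2-2*δ)/(2*δ) + (1-δ)^2/(4*δ^2)) ≤ 2 * (δ^3)⁻¹ := by
  have hδne : δ ≠ 0 := hδ0.ne'
  have h2 : ((1-δ)/(2*δ) + (1-δ)^2/(4*δ^2))
      + 2*((2-3*δ)/δ + (1-δ)*(1-2*δ)/δ^2)
      + ((3-3*δ)/δ + 2*(1-δ)^2/δ^2)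
      + ((1/δ + (1-δ)/δ^2)*(1-δ)*(1-2*δ)
        + ((1-δ)/δ)*(1/(2*δ) + (1-δ)/(4*δ^2))*(1-2*δ)
        + ((1-δ)/δ)*(1-δ))
      + ((2-2*δ)/(2*δ) + (1-δ)^2/(4*δ^2))
      = (1 + 20*δ - 19*δ^2 - 14*δ^3 + 4*δ^4)/(4*δ^3) := by
    field_simp
    ring
  have h8 : (2 * (δ^3)⁻¹ : ℝ) = 8/(4*δ^3) := by
    field_simp
    ring
  rw [h2, h8, div_le_div_iff_of_pos_right (by positivity)]
  nlinarith [sq_nonneg (19*δ-10), mul_nonneg (pow_nonneg hδ0.le 3) (by linarith : (0:ℝ) ≤ 14-4*δ)]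

set_option maxHeartbeats 2000000 in
/-- Pointwise Lipschitz property of the empirical deviation Δₙ in θ:
    |Δₙ(θ,x,y) − Δₙ(θ',x,y)| ≤ 2δ⁻³(|α−α'| + |β−β'|). -/
theorem empirical_deviation_lipschitz
    {E : Type*} (δ : ℝ) (hδ0 : 0 < δ) (hδ : δ < 1/2)
    (F0 : E → ℝ) (G0 : E × E → ℝ) (Fhat : E → ℝ) (Ghat : E × E → ℝ)
    (hF0 : ∀ x, F0 x ∈ Set.Icc (0:ℝ) 1)
    (hFhat : ∀ x, Fhat x ∈ Set.Icc (0:ℝ) 1)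
    (hG0 : ∀ z, G0 z ∈ Set.Icc (0:ℝ) 1)
    (Fh1 : ℝ × ℝ → E → ℝ)
    (hFh1 : ∀ (α β : ℝ) (x : E),
      Fh1 (α, β) x = (Fhat x - (β/(α+β)) * F0 x) / (α/(α+β)))
    (Δn : ℝ × ℝ → E × E → ℝ)
    (hΔn : ∀ (α β : ℝ) (x y : E),
      Δn (α, β) (x, y) = Ghat (x,y) - ((β*(1-α)/(α+β)) * G0 (x,y)
        + (α*β/(α+β)) * F0 x * Fh1 (α, β) y
        + (α*β/(α+β)) * Fh1 (α, β) x * F0 y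
        + (α*(1-β)/(α+β)) * Fh1 (α, β) x * Fh1 (α, β) y)) :
    ∀ α β α' β' : ℝ,
      α ∈ Set.Icc δ (1-δ) → β ∈ Set.Icc δ (1-δ) →
      α' ∈ Set.Icc δ (1-δ) → β' ∈ Set.Icc δ (1-δ) →
      ∀ x y : E,
        |Δn (α, β) (x, y) - Δn (α', β') (x, y)|
          ≤ 2 * δ⁻¹^3 * (|α - α'| + |β - β'|) := by
  intro α β α' β' hα hβ hα' hβ' x y
  obtain ⟨hα1, hα2⟩ := hα
  obtain ⟨hβ1, hβ2⟩ := hβ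
  obtain ⟨hα'1, hα'2⟩ := hα'
  obtain ⟨hβ'1, hβ'2⟩ := hβ'
  have ha : 0 < α := lt_of_lt_of_le hδ0 hα1
  have hb : 0 < β := lt_of_lt_of_le hδ0 hβ1
  have ha' : 0 < α' := lt_of_lt_of_le hδ0 hα'1
  have hb' : 0 < β' := lt_of_lt_of_le hδ0 hβ'1
  have hs : 0 < α + β := by linarith
  have hs' : 0 < α' + β' := by linarith
  have hδp : 0 < 2*δ := by linarith
  have hδ2p : 0 < 4*δ^2 := by positivity
  have hδsq : 0 < δ^2 := by positivity
  -- expansion of Δn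
  have expand : ∀ a b : ℝ, 0 < a → 0 < a + b →
      Δn (a, b) (x, y) = Ghat (x,y) - (b*(1-a)/(a+b)) * G0 (x,y)
        - (b*((a+b)-1)/a) * (F0 x * Fhat y + Fhat x * F0 y)
        - ((1-b)*(a+b)/a) * (Fhat x * Fhat y)
        - ((b/a)*(b/(a+b))*(1-(a+b))) * (F0 x * F0 y)
        + (b^2/(a+b)) * (F0 x * F0 y) := by
    intro a b hpa hpab
    have ha0 : a ≠ 0 := hpa.ne'
    have hab0 : a + b ≠ 0 := hpab.ne'
    rw [hΔn, hFh1, hFh1]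
    field_simp
    ring
  set dd := |α - α'| + |β - β'| with hdd
  have hdd0 : 0 ≤ dd := add_nonneg (abs_nonneg _) (abs_nonneg _)
  have hdα : |α - α'| ≤ dd := le_add_of_nonneg_right (abs_nonneg _)
  have hdβ : |β - β'| ≤ dd := le_add_of_nonneg_left (abs_nonneg _)
  have hdβ' : |β' - β| ≤ dd := by rw [abs_sub_comm]; exact hdβ
  have hdα' : |α' - α| ≤ dd := by rw [abs_sub_comm]; exact hdα
  have hds : |(α+β) - (α'+β')| ≤ dd := by
    have h : (α+β) - (α'+β') = (α-α') + (β-β') := by ring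
    rw [h]
    exact abs_add_le _ _
  have hds' : |(α'+β') - (α+β)| ≤ dd := by rw [abs_sub_comm]; exact hds
  -- elementary abs bounds
  have hβa : |β| ≤ 1 - δ := by rw [abs_of_pos hb]; exact hβ2
  have hβ'a : |β'| ≤ 1 - δ := by rw [abs_of_pos hb']; exact hβ'2
  have h1α'a : |1-α'| ≤ 1 - δ := by rw [abs_of_nonneg (by linarith)]; linarith
  have h1βa : |1-β| ≤ 1 - δ := by rw [abs_of_nonneg (by linarith)]; linarith
  have hs'a : |α'+β'| ≤ 2 - 2*δ := by rw [abs_of_pos hs']; linarith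
  have hsm1 : |(α+β)-1| ≤ 1 - 2*δ := abs_le.mpr ⟨by linarith, by linarith⟩
  have hs'm1 : |(α'+β')-1| ≤ 1 - 2*δ := abs_le.mpr ⟨by linarith, by linarith⟩
  have h2δs : 2*δ ≤ α + β := by linarith
  have h2δs' : 2*δ ≤ α' + β' := by linarith
  have h4δ2 : 4*δ^2 ≤ (α'+β')*(α+β) := by
    calc 4*δ^2 = (2*δ)*(2*δ) := by ring
      _ ≤ (α'+β')*(α+β) := mul_le_mul h2δs' h2δs hδp.le hs'.le
  have h4δ2b : 4*δ^2 ≤ (α+β)*(α'+β') := by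
    rw [mul_comm (α+β) (α'+β')]
    exact h4δ2
  have hδ2aa : δ^2 ≤ α'*α := by
    calc δ^2 = δ*δ := by ring
      _ ≤ α'*α := mul_le_mul hα'1 hα1 hδ0.le ha'.le
  have heδ : (0:ℝ) ≤ 1 - δ := by linarith
  have hfδ : (0:ℝ) ≤ 1 - 2*δ := by linarith
  -- bounds on the observable factors
  have hu0 := hF0 x; have hv0 := hF0 y; have hA0 := hFhat x; have hB0 := hFhat y
  have hg0 := hG0 (x, y)
  have hgb : |G0 (x,y)| ≤ 1 := abs_le.mpr ⟨by linarith [hg0.1], hg0.2⟩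
  have hub : |F0 x| ≤ 1 := abs_le.mpr ⟨by linarith [hu0.1], hu0.2⟩
  have hvb : |F0 y| ≤ 1 := abs_le.mpr ⟨by linarith [hv0.1], hv0.2⟩
  have hAb : |Fhat x| ≤ 1 := abs_le.mpr ⟨by linarith [hA0.1], hA0.2⟩
  have hBb : |Fhat y| ≤ 1 := abs_le.mpr ⟨by linarith [hB0.1], hB0.2⟩
  have hMb : |F0 x * Fhat y + Fhat x * F0 y| ≤ 2 := by
    calc |F0 x * Fhat y + Fhat x * F0 y| ≤ |F0 x * Fhat y| + |Fhat x * F0 y| := abs_add_le _ _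
      _ = |F0 x| * |Fhat y| + |Fhat x| * |F0 y| := by rw [abs_mul, abs_mul]
      _ ≤ 1 * 1 + 1 * 1 := add_le_add
          (mul_le_mul hub hBb (abs_nonneg _) zero_le_one)
          (mul_le_mul hAb hvb (abs_nonneg _) zero_le_one)
      _ = 2 := by norm_num
  have hABb : |Fhat x * Fhat y| ≤ 1 := by
    rw [abs_mul]
    calc |Fhat x| * |Fhat y| ≤ 1 * 1 := mul_le_mul hAb hBb (abs_nonneg _) zero_le_one
      _ = 1 := by norm_num
  have huvb : |F0 x * F0 y| ≤ 1 := by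
    rw [abs_mul]
    calc |F0 x| * |F0 y| ≤ 1 * 1 := mul_le_mul hub hvb (abs_nonneg _) zero_le_one
      _ = 1 := by norm_num
  -- B1 : first coefficient
  have B1 : |β'*(1-α')/(α'+β') - β*(1-α)/(α+β)|
      ≤ ((1-δ)/(2*δ) + (1-δ)^2/(4*δ^2)) * dd := by
    refine (quot_diff_abs _ _ _ _ hs' hs).trans ?_
    have num1 : |β'*(1-α') - β*(1-α)| ≤ (1-δ)*dd := by
      refine (mul_diff_abs _ _ _ _).trans ?_
      calc |β'-β| * |1-α'| + |β| * |(1-α')-(1-α)|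
          = |β'-β| * |1-α'| + |β| * |α-α'| := by
            rw [show (1-α')-(1-α) = α-α' from by ring]
        _ ≤ |β'-β| * (1-δ) + (1-δ) * |α-α'| := add_le_add
            (mul_le_mul_of_nonneg_left h1α'a (abs_nonneg _))
            (mul_le_mul_of_nonneg_right hβa (abs_nonneg _))
        _ = (1-δ) * (|α-α'| + |β'-β|) := by ring
        _ = (1-δ)*dd := by rw [abs_sub_comm β' β]
    have num2 : |β*(1-α)| * |(α'+β')-(α+β)| ≤ (1-δ)^2 * dd := by
      have h1 : |β*(1-α)| ≤ (1-δ)^2 := by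
        rw [abs_mul, sq]
        refine mul_le_mul hβa ?_ (abs_nonneg _) heδ
        rw [abs_of_nonneg (by linarith)]; linarith
      exact mul_le_mul h1 hds' (abs_nonneg _) (by positivity)
    calc |β'*(1-α') - β*(1-α)|/(α'+β') + |β*(1-α)| * |(α'+β')-(α+β)|/((α'+β')*(α+β))
        ≤ ((1-δ)*dd)/(2*δ) + ((1-δ)^2 * dd)/(4*δ^2) := add_le_add
          (div_le_div₀ (mul_nonneg heδ hdd0) num1 hδp h2δs')
          (div_le_div₀ (mul_nonneg (sq_nonneg _) hdd0) num2 hδ2p h4δ2)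
      _ = ((1-δ)/(2*δ) + (1-δ)^2/(4*δ^2)) * dd := by ring
  -- B2 : second coefficient
  have B2 : |β'*((α'+β')-1)/α' - β*((α+β)-1)/α|
      ≤ ((2-3*δ)/δ + (1-δ)*(1-2*δ)/δ^2) * dd := by
    refine (quot_diff_abs _ _ _ _ ha' ha).trans ?_
    have num1 : |β'*((α'+β')-1) - β*((α+β)-1)| ≤ (2-3*δ)*dd := by
      refine (mul_diff_abs _ _ _ _).trans ?_
      calc |β'-β| * |(α'+β')-1| + |β| * |((α'+β')-1)-((α+β)-1)|
          = |β'-β| * |(α'+β')-1| + |β| * |(α'+β')-(α+β)| := by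
            rw [show ((α'+β')-1)-((α+β)-1) = (α'+β')-(α+β) from by ring]
        _ ≤ |β'-β| * (1-2*δ) + (1-δ) * dd := add_le_add
            (mul_le_mul_of_nonneg_left hs'm1 (abs_nonneg _))
            (mul_le_mul hβa hds' (abs_nonneg _) heδ)
        _ ≤ dd * (1-2*δ) + (1-δ) * dd :=
            add_le_add (mul_le_mul_of_nonneg_right hdβ' hfδ) le_rfl
        _ = (2-3*δ)*dd := by ring
    have num2 : |β*((α+β)-1)| * |α'-α| ≤ ((1-δ)*(1-2*δ)) * dd := by
      have h1 : |β*((α+β)-1)| ≤ (1-δ)*(1-2*δ) := by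
        rw [abs_mul]
        exact mul_le_mul hβa hsm1 (abs_nonneg _) heδ
      exact mul_le_mul h1 hdα' (abs_nonneg _) (mul_nonneg heδ hfδ)
    calc |β'*((α'+β')-1) - β*((α+β)-1)|/α' + |β*((α+β)-1)| * |α'-α|/(α'*α)
        ≤ ((2-3*δ)*dd)/δ + (((1-δ)*(1-2*δ))*dd)/δ^2 := add_le_add
          (div_le_div₀ (mul_nonneg (by linarith : (0:ℝ) ≤ 2-3*δ) hdd0) num1 hδ0 hα'1)
          (div_le_div₀ (mul_nonneg (mul_nonneg heδ hfδ) hdd0) num2 hδsq hδ2aa)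
      _ = ((2-3*δ)/δ + (1-δ)*(1-2*δ)/δ^2) * dd := by ring
  -- B3 : third coefficient
  have B3 : |(1-β')*(α'+β')/α' - (1-β)*(α+β)/α|
      ≤ ((3-3*δ)/δ + 2*(1-δ)^2/δ^2) * dd := by
    refine (quot_diff_abs _ _ _ _ ha' ha).trans ?_
    have num1 : |(1-β')*(α'+β') - (1-β)*(α+β)| ≤ (3-3*δ)*dd := by
      refine (mul_diff_abs _ _ _ _).trans ?_
      calc |(1-β')-(1-β)| * |α'+β'| + |1-β| * |(α'+β')-(α+β)|
          = |β-β'| * |α'+β'| + |1-β| * |(α'+β')-(α+β)| := by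
            rw [show (1-β')-(1-β) = β-β' from by ring]
        _ ≤ |β-β'| * (2-2*δ) + (1-δ) * dd := add_le_add
            (mul_le_mul_of_nonneg_left hs'a (abs_nonneg _))
            (mul_le_mul h1βa hds' (abs_nonneg _) heδ)
        _ ≤ dd * (2-2*δ) + (1-δ) * dd :=
            add_le_add (mul_le_mul_of_nonneg_right hdβ (by linarith)) le_rfl
        _ = (3-3*δ)*dd := by ring
    have num2 : |(1-β)*(α+β)| * |α'-α| ≤ (2*(1-δ)^2) * dd := by
      have h1 : |(1-β)*(α+β)| ≤ 2*(1-δ)^2 := by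
        rw [abs_mul]
        calc |1-β| * |α+β| ≤ (1-δ) * (2-2*δ) :=
            mul_le_mul h1βa (by rw [abs_of_pos hs]; linarith) (abs_nonneg _) heδ
          _ = 2*(1-δ)^2 := by ring
      exact mul_le_mul h1 hdα' (abs_nonneg _) (mul_nonneg (by norm_num : (0:ℝ) ≤ 2) (sq_nonneg _))
    calc |(1-β')*(α'+β') - (1-β)*(α+β)|/α' + |(1-β)*(α+β)| * |α'-α|/(α'*α)
        ≤ ((3-3*δ)*dd)/δ + ((2*(1-δ)^2)*dd)/δ^2 := add_le_add
          (div_le_div₀ (mul_nonneg (by linarith : (0:ℝ) ≤ 3-3*δ) hdd0) num1 hδ0 hα'1)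
          (div_le_div₀ (mul_nonneg (mul_nonneg (by norm_num : (0:ℝ) ≤ 2) (sq_nonneg _)) hdd0) num2 hδsq hδ2aa)
      _ = ((3-3*δ)/δ + 2*(1-δ)^2/δ^2) * dd := by ring
  -- B4 : fourth coefficient (triple product)
  have B4 : |(β'/α')*(β'/(α'+β'))*(1-(α'+β')) - (β/α)*(β/(α+β))*(1-(α+β))|
      ≤ ((1/δ + (1-δ)/δ^2)*(1-δ)*(1-2*δ)
        + ((1-δ)/δ)*(1/(2*δ) + (1-δ)/(4*δ^2))*(1-2*δ)
        + ((1-δ)/δ)*(1-δ)) * dd := by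
    have ht : |β'/α' - β/α| ≤ dd/δ + ((1-δ)*dd)/δ^2 := by
      refine (quot_diff_abs _ _ _ _ ha' ha).trans ?_
      exact add_le_add
        (div_le_div₀ hdd0 hdβ' hδ0 hα'1)
        (div_le_div₀ (mul_nonneg heδ hdd0) (mul_le_mul hβa hdα' (abs_nonneg _) heδ) hδsq hδ2aa)
    have hq' : |β'/(α'+β')| ≤ 1-δ := by
      rw [abs_of_nonneg (by positivity)]
      rw [div_le_iff₀ hs']
      have k1 : δ*β' ≤ δ*(1-δ) := mul_le_mul_of_nonneg_left hβ'2 hδ0.le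
      have k2 : (1-δ)*δ ≤ (1-δ)*α' := mul_le_mul_of_nonneg_left hα'1 heδ
      linarith only [k1, k2]
    have hr' : |1-(α'+β')| ≤ 1-2*δ := abs_le.mpr ⟨by linarith, by linarith⟩
    have ht' : |β/α| ≤ (1-δ)/δ := by
      rw [abs_of_nonneg (by positivity)]
      exact div_le_div₀ heδ hβ2 hδ0 hα1
    have hq : |β'/(α'+β') - β/(α+β)| ≤ dd/(2*δ) + ((1-δ)*dd)/(4*δ^2) := by
      refine (quot_diff_abs _ _ _ _ hs' hs).trans ?_
      exact add_le_add
        (div_le_div₀ hdd0 hdβ' hδp h2δs')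
        (div_le_div₀ (mul_nonneg heδ hdd0) (mul_le_mul hβa hds' (abs_nonneg _) heδ) hδ2p h4δ2)
    have hrr : |(1-(α'+β'))-(1-(α+β))| ≤ dd := by
      rw [show (1-(α'+β'))-(1-(α+β)) = (α+β)-(α'+β') from by ring]
      exact hds
    refine (mul3_diff_abs _ _ _ _ _ _).trans ?_
    have hqb : |β/(α+β)| ≤ 1-δ := by
      rw [abs_of_nonneg (by positivity)]
      rw [div_le_iff₀ hs]
      have k1 : δ*β ≤ δ*(1-δ) := mul_le_mul_of_nonneg_left hβ2 hδ0.le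
      have k2 : (1-δ)*δ ≤ (1-δ)*α := mul_le_mul_of_nonneg_left hα1 heδ
      linarith only [k1, k2]
    calc |β'/α' - β/α| * |β'/(α'+β')| * |1-(α'+β')|
          + |β/α| * |β'/(α'+β') - β/(α+β)| * |1-(α'+β')|
          + |β/α| * |β/(α+β)| * |(1-(α'+β'))-(1-(α+β))|
        ≤ (dd/δ + ((1-δ)*dd)/δ^2) * (1-δ) * (1-2*δ)
          + ((1-δ)/δ) * (dd/(2*δ) + ((1-δ)*dd)/(4*δ^2)) * (1-2*δ)
          + ((1-δ)/δ) * (1-δ) * dd := by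
          exact add_le_add (add_le_add
            (prod3_le (abs_nonneg _) (abs_nonneg _) (abs_nonneg _) ht hq' hr')
            (prod3_le (abs_nonneg _) (abs_nonneg _) (abs_nonneg _) ht' hq hr'))
            (prod3_le (abs_nonneg _) (abs_nonneg _) (abs_nonneg _) ht' hqb hrr)
      _ = ((1/δ + (1-δ)/δ^2)*(1-δ)*(1-2*δ)
          + ((1-δ)/δ)*(1/(2*δ) + (1-δ)/(4*δ^2))*(1-2*δ)
          + ((1-δ)/δ)*(1-δ)) * dd := by ring
  -- B5 : fifth coefficient
  have B5 : |β^2/(α+β) - β'^2/(α'+β')|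
      ≤ ((2-2*δ)/(2*δ) + (1-δ)^2/(4*δ^2)) * dd := by
    refine (quot_diff_abs _ _ _ _ hs hs').trans ?_
    have num1 : |β^2 - β'^2| ≤ (2-2*δ)*dd := by
      rw [show β^2 - β'^2 = (β-β')*(β+β') from by ring, abs_mul]
      have hbb' : |β+β'| ≤ 2-2*δ := by
        rw [abs_of_pos (by linarith : (0:ℝ) < β+β')]
        linarith
      calc |β-β'| * |β+β'| ≤ dd * (2-2*δ) := mul_le_mul hdβ hbb' (abs_nonneg _) hdd0
        _ = (2-2*δ)*dd := by ring
    have num2 : |β'^2| * |(α+β)-(α'+β')| ≤ (1-δ)^2 * dd := by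
      have h1 : |β'^2| ≤ (1-δ)^2 := by
        rw [abs_of_nonneg (sq_nonneg _)]
        exact pow_le_pow_left₀ hb'.le hβ'2 2
      exact mul_le_mul h1 hds (abs_nonneg _) (sq_nonneg _)
    calc |β^2 - β'^2|/(α+β) + |β'^2| * |(α+β)-(α'+β')|/((α+β)*(α'+β'))
        ≤ ((2-2*δ)*dd)/(2*δ) + ((1-δ)^2*dd)/(4*δ^2) := add_le_add
          (div_le_div₀ (mul_nonneg (by linarith : (0:ℝ) ≤ 2-2*δ) hdd0) num1 hδp h2δs)
          (div_le_div₀ (mul_nonneg (sq_nonneg _) hdd0) num2 hδ2p h4δ2b)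
      _ = ((2-2*δ)/(2*δ) + (1-δ)^2/(4*δ^2)) * dd := by ring
  -- split the difference into the five terms
  have e1 : Δn (α,β) (x,y) - Δn (α',β') (x,y) =
      (β'*(1-α')/(α'+β') - β*(1-α)/(α+β)) * G0 (x,y)
      + (β'*((α'+β')-1)/α' - β*((α+β)-1)/α) * (F0 x * Fhat y + Fhat x * F0 y)
      + ((1-β')*(α'+β')/α' - (1-β)*(α+β)/α) * (Fhat x * Fhat y)
      + ((β'/α')*(β'/(α'+β'))*(1-(α'+β')) - (β/α)*(β/(α+β))*(1-(α+β))) * (F0 x * F0 y)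
      + (β^2/(α+β) - β'^2/(α'+β')) * (F0 x * F0 y) := by
    rw [expand α β ha hs, expand α' β' ha' hs']
    ring
  rw [e1]
  have hKf := Kbound δ hδ0 hδ
  calc |(β'*(1-α')/(α'+β') - β*(1-α)/(α+β)) * G0 (x,y)
      + (β'*((α'+β')-1)/α' - β*((α+β)-1)/α) * (F0 x * Fhat y + Fhat x * F0 y)
      + ((1-β')*(α'+β')/α' - (1-β)*(α+β)/α) * (Fhat x * Fhat y)
      + ((β'/α')*(β'/(α'+β'))*(1-(α'+β')) - (β/α)*(β/(α+β))*(1-(α+β))) * (F0 x * F0 y)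
      + (β^2/(α+β) - β'^2/(α'+β')) * (F0 x * F0 y)|
      ≤ |(β'*(1-α')/(α'+β') - β*(1-α)/(α+β)) * G0 (x,y)|
      + |(β'*((α'+β')-1)/α' - β*((α+β)-1)/α) * (F0 x * Fhat y + Fhat x * F0 y)|
      + |((1-β')*(α'+β')/α' - (1-β)*(α+β)/α) * (Fhat x * Fhat y)|
      + |((β'/α')*(β'/(α'+β'))*(1-(α'+β')) - (β/α)*(β/(α+β))*(1-(α+β))) * (F0 x * F0 y)|
      + |(β^2/(α+β) - β'^2/(α'+β')) * (F0 x * F0 y)| := abs_add5 _ _ _ _ _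
    _ ≤ (((1-δ)/(2*δ) + (1-δ)^2/(4*δ^2)) * dd) * 1
      + (((2-3*δ)/δ + (1-δ)*(1-2*δ)/δ^2) * dd) * 2
      + (((3-3*δ)/δ + 2*(1-δ)^2/δ^2) * dd) * 1
      + ((((1/δ + (1-δ)/δ^2)*(1-δ)*(1-2*δ)
          + ((1-δ)/δ)*(1/(2*δ) + (1-δ)/(4*δ^2))*(1-2*δ)
          + ((1-δ)/δ)*(1-δ)) * dd)) * 1
      + ((((2-2*δ)/(2*δ) + (1-δ)^2/(4*δ^2)) * dd)) * 1 := by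
        have ham : ∀ c f C F : ℝ, |c| ≤ C → |f| ≤ F → |c*f| ≤ C*F := by
          intro c f C F h1 h2
          rw [abs_mul]
          exact mul_le_mul h1 h2 (abs_nonneg _) ((abs_nonneg _).trans h1)
        exact add_le_add (add_le_add (add_le_add (add_le_add
          (ham _ _ _ _ B1 hgb)
          (ham _ _ _ _ B2 hMb))
          (ham _ _ _ _ B3 hABb))
          (ham _ _ _ _ B4 huvb))
          (ham _ _ _ _ B5 huvb)
    _ = (((1-δ)/(2*δ) + (1-δ)^2/(4*δ^2))
      + 2*((2-3*δ)/δ + (1-δ)*(1-2*δ)/δ^2)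
      + ((3-3*δ)/δ + 2*(1-δ)^2/δ^2)
      + ((1/δ + (1-δ)/δ^2)*(1-δ)*(1-2*δ)
        + ((1-δ)/δ)*(1/(2*δ) + (1-δ)/(4*δ^2))*(1-2*δ)
        + ((1-δ)/δ)*(1-δ))
      + ((2-2*δ)/(2*δ) + (1-δ)^2/(4*δ^2))) * dd := by ring
    _ ≤ (2 * (δ^3)⁻¹) * dd := mul_le_mul_of_nonneg_right hKf hdd0
    _ = 2 * δ⁻¹^3 * dd := by ring
end

section
/- Let (E, 𝓔) be a measurable space, let H be a probability measure on E × E, assume F⁰, F̂ are measurable with values in [0,1] and G⁰, Ĝ are measurable with values in [0,1], and define dₙ(θ) = ∬ Δₙ(θ,x,y)² dH(x,y). Then for all θ, θ' ∈ Θ = [δ,1−δ]², |dₙ(θ) − dₙ(θ')| ≤ 16 δ⁻⁴ (|α−α'| + |β−β'|); in particular dₙ is Lipschitz continuous on Θ with respect to the ℓ¹-norm. -/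
open MeasureTheory


noncomputable def Dexpr (α β u v s t g g0 : ℝ) : ℝ :=
  g - ((β*(1-α)/(α+β))*g0 + β*u*(t - (β/(α+β))*v) + β*(s - (β/(α+β))*u)*v
      + (1-β)*(s + (β/α)*(s-u))*(t - (β/(α+β))*v))

lemma abs_prod2_diff (a b a' b' : ℝ) :
    |a*b - a'*b'| ≤ |a - a'| * |b| + |a'| * |b - b'| := by
  have h : a*b - a'*b' = (a-a')*b + a'*(b-b') := by ring
  rw [h]
  refine (abs_add_le _ _).trans ?_
  simp [abs_mul]

lemma abs_prod3_diff (a b c a' b' c' : ℝ) :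
    |a*b*c - a'*b'*c'| ≤ |a - a'| * |b| * |c| + |a'| * |b - b'| * |c| + |a'| * |b'| * |c - c'| := by
  have h : a*b*c - a'*b'*c' = (a-a')*b*c + a'*(b-b')*c + a'*b'*(c-c') := by ring
  rw [h]
  calc |(a-a')*b*c + a'*(b-b')*c + a'*b'*(c-c')|
      ≤ |(a-a')*b*c + a'*(b-b')*c| + |a'*b'*(c-c')| := abs_add_le _ _
    _ ≤ |(a-a')*b*c| + |a'*(b-b')*c| + |a'*b'*(c-c')| :=
        add_le_add_left (abs_add_le _ _) _
    _ = |a - a'| * |b| * |c| + |a'| * |b - b'| * |c| + |a'| * |b'| * |c - c'| := by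
        simp [abs_mul]

lemma two_le_inv_delta {δ : ℝ} (hδ0 : 0 < δ) (hδ : δ < 1/2) : 2 ≤ δ⁻¹ := by
  have h1 : δ * δ⁻¹ = 1 := mul_inv_cancel₀ hδ0.ne'
  nlinarith [inv_nonneg.mpr hδ0.le]

lemma mul3_le {x y z X Y Z : ℝ} (hx : x ≤ X) (hy : y ≤ Y) (hz : z ≤ Z)
    (hx0 : 0 ≤ x) (hy0 : 0 ≤ y) (hz0 : 0 ≤ z) : x*y*z ≤ X*Y*Z :=
  mul_le_mul (mul_le_mul hx hy hy0 (hx0.trans hx)) hz hz0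
    (mul_nonneg (hx0.trans hx) (hy0.trans hy))

lemma mul2_le {x y X Y : ℝ} (hx : x ≤ X) (hy : y ≤ Y)
    (hx0 : 0 ≤ x) (hy0 : 0 ≤ y) : x*y ≤ X*Y :=
  mul_le_mul hx hy hy0 (hx0.trans hx)

/-- |t - r*v| ≤ 1 when everything is in [0,1]. -/
lemma aux_tp {r t v : ℝ} (h0 : 0 ≤ r) (h1 : r ≤ 1) (ht0 : 0 ≤ t) (ht1 : t ≤ 1)
    (hv0 : 0 ≤ v) (hv1 : v ≤ 1) : |t - r*v| ≤ 1 := by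
  have h2 : 0 ≤ r*v := mul_nonneg h0 hv0
  have h3 : r*v ≤ 1 := mul_le_one₀ h1 hv0 hv1
  rw [abs_le]; constructor <;> linarith

/-- |s + (b/a)(s-u)| ≤ δ⁻¹ when δ ≤ a, 0 ≤ b ≤ 1-δ and s,u ∈ [0,1]. -/
lemma aux_F {δ a b s u : ℝ} (hδ0 : 0 < δ) (hal : δ ≤ a) (hb0 : 0 ≤ b) (hbr : b ≤ 1 - δ)
    (hu0 : 0 ≤ u) (hu1 : u ≤ 1) (hs0 : 0 ≤ s) (hs1 : s ≤ 1) :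
    |s + (b/a)*(s-u)| ≤ δ⁻¹ := by
  have hδinv : δ * δ⁻¹ = 1 := mul_inv_cancel₀ hδ0.ne'
  have ha0 : 0 < a := lt_of_lt_of_le hδ0 hal
  have hq0 : 0 ≤ b/a := div_nonneg hb0 ha0.le
  have hq1 : b/a ≤ δ⁻¹ - 1 := by
    rw [div_le_iff₀ ha0]
    have hK1 : (1:ℝ) ≤ δ⁻¹ := by nlinarith [inv_nonneg.mpr hδ0.le]
    nlinarith [mul_nonneg (by linarith : (0:ℝ) ≤ δ⁻¹ - 1) (by linarith : 0 ≤ a - δ)]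
  have h1 : |(b/a)*(s-u)| ≤ δ⁻¹ - 1 := by
    rw [abs_mul, abs_of_nonneg hq0]
    have h2 : |s - u| ≤ 1 := by rw [abs_le]; constructor <;> linarith
    calc (b/a) * |s-u| ≤ (δ⁻¹-1) * 1 := mul2_le hq1 h2 hq0 (abs_nonneg _)
      _ = δ⁻¹ - 1 := by ring
  calc |s + (b/a)*(s-u)| ≤ |s| + |(b/a)*(s-u)| := abs_add_le _ _
    _ ≤ 1 + (δ⁻¹ - 1) := add_le_add (by rw [abs_of_nonneg hs0]; exact hs1) h1
    _ = δ⁻¹ := by ring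

lemma aux_sum_num {a b X Y : ℝ} (ha : 0 ≤ a) (hb : 0 ≤ b) (hX : 0 ≤ X) (hY : 0 ≤ Y) :
    a*Y + b*X ≤ (a+b)*(X+Y) := by nlinarith

lemma aux_div1 {δ d : ℝ} (hδ0 : 0 < δ) (hd : 0 ≤ d) : d/(2*δ) ≤ δ⁻¹*d := by
  rw [div_le_iff₀ (by positivity)]
  have hδinv : δ * δ⁻¹ = 1 := mul_inv_cancel₀ hδ0.ne'
  nlinarith

lemma aux_div2 {δ d : ℝ} (hδ0 : 0 < δ) (hd : 0 ≤ d) : d/(δ*δ) ≤ δ⁻¹^2*d := by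
  rw [div_le_iff₀ (by positivity)]
  have h2 : δ⁻¹^2*(δ*δ) = 1 := by rw [show δ*δ = δ^2 from by ring]; field_simp
  have h3 : δ⁻¹^2 * d * (δ*δ) = d := by
    rw [show δ⁻¹^2*d*(δ*δ) = d*(δ⁻¹^2*(δ*δ)) from by ring, h2, mul_one]
  exact h3.ge

lemma aux_final {K d A B C D' : ℝ} (hK : 2 ≤ K) (hd : 0 ≤ d)
    (hA : A ≤ K*d + d) (hB : B ≤ d + K*d) (hC : C ≤ d + K*d)
    (hD : D' ≤ K*d + K^2*d + K^2*d) :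
    A + B + C + D' ≤ 5*K^2*d := by nlinarith [mul_nonneg (by linarith : (0:ℝ) ≤ K) hd]

lemma Dexpr_abs_le {δ α β u v s t g g0 : ℝ} (hδ0 : 0 < δ) (hδ : δ < 1/2)
    (hαl : δ ≤ α) (hαr : α ≤ 1 - δ) (hβl : δ ≤ β) (hβr : β ≤ 1 - δ)
    (hu0 : 0 ≤ u) (hu1 : u ≤ 1) (hv0 : 0 ≤ v) (hv1 : v ≤ 1)
    (hs0 : 0 ≤ s) (hs1 : s ≤ 1) (ht0 : 0 ≤ t) (ht1 : t ≤ 1)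
    (hgl : 0 ≤ g) (hgr : g ≤ 1) (hhl : 0 ≤ g0) (hhr : g0 ≤ 1) :
    |Dexpr α β u v s t g g0| ≤ 3 * δ⁻¹ := by
  have hK := two_le_inv_delta hδ0 hδ
  have hα0 : 0 < α := lt_of_lt_of_le hδ0 (le_of_le_of_eq hαl rfl)
  have hβ0 : 0 < β := lt_of_lt_of_le hδ0 hβl
  have hab : 0 < α + β := by linarith
  have hδinv : δ * δ⁻¹ = 1 := mul_inv_cancel₀ hδ0.ne'
  set p : ℝ := β/(α+β) with hp
  have hp0 : 0 ≤ p := div_nonneg hβ0.le hab.le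
  have hp1 : p ≤ 1 := by rw [hp, div_le_one hab]; linarith
  have hq0 : 0 ≤ β/α := div_nonneg hβ0.le hα0.le
  have hq1 : β/α ≤ δ⁻¹ - 1 := by
    rw [div_le_iff₀ hα0]
    nlinarith [mul_nonneg (by linarith : (0:ℝ) ≤ δ⁻¹ - 1) (by linarith : 0 ≤ α - δ), hδinv]
  have hcv : |t - p*v| ≤ 1 := by
    have hpv0 : 0 ≤ p*v := mul_nonneg hp0 hv0
    have hpv1 : p*v ≤ 1 := by nlinarith
    rw [abs_le]; constructor <;> linarith
  have hcu : |s - p*u| ≤ 1 := by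
    have hpu0 : 0 ≤ p*u := mul_nonneg hp0 hu0
    have hpu1 : p*u ≤ 1 := by nlinarith
    rw [abs_le]; constructor <;> linarith
  have hF : |s + (β/α)*(s-u)| ≤ δ⁻¹ := by
    have h1 : |(β/α)*(s-u)| ≤ δ⁻¹ - 1 := by
      rw [abs_mul, abs_of_nonneg hq0]
      have : |s - u| ≤ 1 := by rw [abs_le]; constructor <;> linarith
      nlinarith
    calc |s + (β/α)*(s-u)| ≤ |s| + |(β/α)*(s-u)| := abs_add_le _ _
      _ ≤ 1 + (δ⁻¹ - 1) := add_le_add (by rw [abs_of_nonneg hs0]; exact hs1) h1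
      _ = δ⁻¹ := by ring
  have hT1 : |(β*(1-α)/(α+β))*g0| ≤ 1 := by
    have he : (β*(1-α)/(α+β))*g0 = p*(1-α)*g0 := by rw [hp]; ring
    rw [he, abs_of_nonneg (mul_nonneg (mul_nonneg hp0 (by linarith)) hhl)]
    exact mul_le_one₀ (mul_le_one₀ hp1 (by linarith) (by linarith)) hhl hhr
  have hT2 : |β*u*(t - p*v)| ≤ 1 := by
    rw [abs_mul, abs_mul, abs_of_nonneg hβ0.le, abs_of_nonneg hu0]
    exact mul_le_one₀ (mul_le_one₀ (by linarith) hu0 hu1) (abs_nonneg _) hcv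
  have hT3 : |β*(s - p*u)*v| ≤ 1 := by
    rw [abs_mul, abs_mul, abs_of_nonneg hβ0.le, abs_of_nonneg hv0]
    calc β * |s - p*u| * v ≤ 1 * 1 * 1 := by
          gcongr <;> first | exact hcu | linarith [abs_nonneg (s - p*u)]
      _ = 1 := by ring
  have hT4 : |(1-β)*(s + (β/α)*(s-u))*(t - p*v)| ≤ δ⁻¹ := by
    rw [abs_mul, abs_mul, abs_of_nonneg (by linarith : (0:ℝ) ≤ 1-β)]
    calc (1-β) * |s + (β/α)*(s-u)| * |t - p*v| ≤ 1 * δ⁻¹ * 1 := by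
          gcongr <;> first | exact hF | exact hcv | linarith [abs_nonneg (s + (β/α)*(s-u)), abs_nonneg (t - p*v)]
      _ = δ⁻¹ := by ring
  have hsum : |(β*(1-α)/(α+β))*g0 + β*u*(t - p*v) + β*(s - p*u)*v
      + (1-β)*(s + (β/α)*(s-u))*(t - p*v)| ≤ 3 + δ⁻¹ := by
    calc |(β*(1-α)/(α+β))*g0 + β*u*(t - p*v) + β*(s - p*u)*v
        + (1-β)*(s + (β/α)*(s-u))*(t - p*v)|
        ≤ |(β*(1-α)/(α+β))*g0 + β*u*(t - p*v) + β*(s - p*u)*v|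
          + |(1-β)*(s + (β/α)*(s-u))*(t - p*v)| := abs_add_le _ _
      _ ≤ (|(β*(1-α)/(α+β))*g0 + β*u*(t - p*v)| + |β*(s - p*u)*v|)
          + |(1-β)*(s + (β/α)*(s-u))*(t - p*v)| := by gcongr; exact abs_add_le _ _
      _ ≤ ((|(β*(1-α)/(α+β))*g0| + |β*u*(t - p*v)|) + |β*(s - p*u)*v|)
          + |(1-β)*(s + (β/α)*(s-u))*(t - p*v)| := by gcongr; exact abs_add_le _ _
      _ ≤ ((1 + 1) + 1) + δ⁻¹ := by gcongr
      _ = 3 + δ⁻¹ := by ring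
  have : |Dexpr α β u v s t g g0| ≤ |g| + (3 + δ⁻¹) := by
    rw [Dexpr, sub_eq_add_neg]
    refine (abs_add_le _ _).trans ?_
    rw [abs_neg]
    exact add_le_add_right hsum _
  rw [abs_of_nonneg hgl] at this
  linarith

set_option maxHeartbeats 1000000 in
lemma Dexpr_lip {δ α β α' β' u v s t g g0 : ℝ} (hδ0 : 0 < δ) (hδ : δ < 1/2)
    (hαl : δ ≤ α) (hαr : α ≤ 1 - δ) (hβl : δ ≤ β) (hβr : β ≤ 1 - δ)
    (hαl' : δ ≤ α') (hαr' : α' ≤ 1 - δ) (hβl' : δ ≤ β') (hβr' : β' ≤ 1 - δ)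
    (hu0 : 0 ≤ u) (hu1 : u ≤ 1) (hv0 : 0 ≤ v) (hv1 : v ≤ 1)
    (hs0 : 0 ≤ s) (hs1 : s ≤ 1) (ht0 : 0 ≤ t) (ht1 : t ≤ 1)
    (hgl : 0 ≤ g) (hgr : g ≤ 1) (hhl : 0 ≤ g0) (hhr : g0 ≤ 1) :
    |Dexpr α β u v s t g g0 - Dexpr α' β' u v s t g g0|
      ≤ 5 * δ⁻¹^2 * (|α - α'| + |β - β'|) := by
  have hK := two_le_inv_delta hδ0 hδ
  have hα0 : (0:ℝ) < α := lt_of_lt_of_le hδ0 hαl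
  have hβ0 : (0:ℝ) < β := lt_of_lt_of_le hδ0 hβl
  have hα0' : (0:ℝ) < α' := lt_of_lt_of_le hδ0 hαl'
  have hβ0' : (0:ℝ) < β' := lt_of_lt_of_le hδ0 hβl'
  have hab : (0:ℝ) < α + β := by linarith
  have hab' : (0:ℝ) < α' + β' := by linarith
  have hd0 : (0:ℝ) ≤ (|α - α'| + |β - β'|) := by positivity
  have hαd : |α - α'| ≤ (|α - α'| + |β - β'|) := le_add_of_nonneg_right (abs_nonneg _)
  have hβd : |β - β'| ≤ (|α - α'| + |β - β'|) := le_add_of_nonneg_left (abs_nonneg _)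
  have hp0 : 0 ≤ (β/(α+β)) := div_nonneg hβ0.le hab.le
  have hp1 : (β/(α+β)) ≤ 1 := by rw [div_le_one hab]; linarith
  have hp0' : 0 ≤ (β'/(α'+β')) := div_nonneg hβ0'.le hab'.le
  have hp1' : (β'/(α'+β')) ≤ 1 := by rw [div_le_one hab']; linarith
  -- numerator bound shared by the p- and q-Lipschitz estimates
  have hnum : |α'*(β-β') + β'*(α'-α)| ≤ α'*|β - β'| + β'*|α - α'| := by
    calc |α'*(β-β') + β'*(α'-α)| ≤ |α'*(β-β')| + |β'*(α'-α)| := abs_add_le _ _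
      _ = α'*|β - β'| + β'*|α - α'| := by
          rw [abs_mul, abs_mul, abs_of_nonneg hα0'.le, abs_of_nonneg hβ0'.le, abs_sub_comm α' α]
  have hpd : |(β/(α+β)) - (β'/(α'+β'))| ≤ δ⁻¹ * (|α - α'| + |β - β'|) := by
    have he : (β/(α+β)) - (β'/(α'+β')) = (α'*(β-β') + β'*(α'-α))/((α+β)*(α'+β')) := by
      field_simp; ring
    rw [he, abs_div]
    have hnum2 : |α'*(β-β') + β'*(α'-α)| ≤ (α'+β') * (|α - α'| + |β - β'|) := by
      refine hnum.trans ?_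
      exact aux_sum_num hα0'.le hβ0'.le (abs_nonneg (α - α')) (abs_nonneg (β - β'))
    have hden : (α'+β') * (2*δ) ≤ |(α+β)*(α'+β')| := by
      rw [abs_of_nonneg (by positivity)]
      nlinarith
    calc |α'*(β-β') + β'*(α'-α)| / |(α+β)*(α'+β')|
        ≤ ((α'+β') * (|α - α'| + |β - β'|)) / ((α'+β') * (2*δ)) :=
          div_le_div₀ (by positivity) hnum2 (by positivity) hden
      _ = (|α - α'| + |β - β'|) / (2*δ) := mul_div_mul_left _ _ (by positivity)
      _ ≤ δ⁻¹ * (|α - α'| + |β - β'|) := aux_div1 hδ0 hd0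
  have hqd : |(β/α) - (β'/α')| ≤ δ⁻¹^2 * (|α - α'| + |β - β'|) := by
    have he : (β/α) - (β'/α') = (α'*(β-β') + β'*(α'-α))/(α*α') := by
      field_simp; ring
    rw [he, abs_div]
    have hnum2 : |α'*(β-β') + β'*(α'-α)| ≤ (|α - α'| + |β - β'|) := by
      refine hnum.trans ?_
      have h1 : α'*|β - β'| ≤ 1*|β - β'| := mul2_le (by linarith) le_rfl hα0'.le (abs_nonneg _)
      have h2 : β'*|α - α'| ≤ 1*|α - α'| := mul2_le (by linarith) le_rfl hβ0'.le (abs_nonneg _)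
      linarith
    have hden : δ * δ ≤ |α*α'| := by
      rw [abs_of_nonneg (by positivity)]
      nlinarith
    calc |α'*(β-β') + β'*(α'-α)| / |α*α'| ≤ (|α - α'| + |β - β'|) / (δ*δ) :=
          div_le_div₀ hd0 hnum2 (by positivity) hden
      _ ≤ δ⁻¹^2 * (|α - α'| + |β - β'|) := aux_div2 hδ0 hd0
  -- bounds on the individual factors
  have hcv : |t - (β/(α+β))*v| ≤ 1 := aux_tp hp0 hp1 ht0 ht1 hv0 hv1
  have hcv' : |t - (β'/(α'+β'))*v| ≤ 1 := aux_tp hp0' hp1' ht0 ht1 hv0 hv1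
  have hcu : |s - (β/(α+β))*u| ≤ 1 := aux_tp hp0 hp1 hs0 hs1 hu0 hu1
  have hcu' : |s - (β'/(α'+β'))*u| ≤ 1 := aux_tp hp0' hp1' hs0 hs1 hu0 hu1
  have hF : |s + (β/α)*(s-u)| ≤ δ⁻¹ := aux_F hδ0 hαl hβ0.le hβr hu0 hu1 hs0 hs1
  have hF' : |s + (β'/α')*(s-u)| ≤ δ⁻¹ := aux_F hδ0 hαl' hβ0'.le hβr' hu0 hu1 hs0 hs1
  have habsu : |u| ≤ 1 := by rw [abs_of_nonneg hu0]; exact hu1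
  have habsv : |v| ≤ 1 := by rw [abs_of_nonneg hv0]; exact hv1
  have habsg0 : |g0| ≤ 1 := by rw [abs_of_nonneg hhl]; exact hhr
  have habsb : |β| ≤ 1 := by rw [abs_of_nonneg hβ0.le]; linarith
  have habsb' : |β'| ≤ 1 := by rw [abs_of_nonneg hβ0'.le]; linarith
  have habs1b : |1-β| ≤ 1 := by rw [abs_of_nonneg (by linarith)]; linarith
  have habs1b' : |1-β'| ≤ 1 := by rw [abs_of_nonneg (by linarith)]; linarith
  -- differences of the individual factors
  have hcvd : |(t - (β/(α+β))*v) - (t - (β'/(α'+β'))*v)| ≤ δ⁻¹ * (|α - α'| + |β - β'|) := by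
    rw [show (t - (β/(α+β))*v) - (t - (β'/(α'+β'))*v) = ((β'/(α'+β')) - (β/(α+β)))*v from by ring, abs_mul, abs_sub_comm (β'/(α'+β')) (β/(α+β))]
    calc |(β/(α+β)) - (β'/(α'+β'))| * |v| ≤ (δ⁻¹ * (|α - α'| + |β - β'|))*1 := mul2_le hpd habsv (abs_nonneg _) (abs_nonneg _)
      _ = δ⁻¹ * (|α - α'| + |β - β'|) := mul_one _
  have hcud : |(s - (β/(α+β))*u) - (s - (β'/(α'+β'))*u)| ≤ δ⁻¹ * (|α - α'| + |β - β'|) := by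
    rw [show (s - (β/(α+β))*u) - (s - (β'/(α'+β'))*u) = ((β'/(α'+β')) - (β/(α+β)))*u from by ring, abs_mul, abs_sub_comm (β'/(α'+β')) (β/(α+β))]
    calc |(β/(α+β)) - (β'/(α'+β'))| * |u| ≤ (δ⁻¹ * (|α - α'| + |β - β'|))*1 := mul2_le hpd habsu (abs_nonneg _) (abs_nonneg _)
      _ = δ⁻¹ * (|α - α'| + |β - β'|) := mul_one _
  have habssu : |s - u| ≤ 1 := by rw [abs_le]; constructor <;> linarith
  have hFd : |(s + (β/α)*(s-u)) - (s + (β'/α')*(s-u))| ≤ δ⁻¹^2 * (|α - α'| + |β - β'|) := by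
    rw [show (s + (β/α)*(s-u)) - (s + (β'/α')*(s-u)) = ((β/α) - (β'/α'))*(s-u) from by ring, abs_mul]
    calc |(β/α) - (β'/α')| * |s-u| ≤ (δ⁻¹^2 * (|α - α'| + |β - β'|))*1 := mul2_le hqd habssu (abs_nonneg _) (abs_nonneg _)
      _ = δ⁻¹^2 * (|α - α'| + |β - β'|) := mul_one _
  -- the four term differences
  have hT1 : |(β'*(1-α')/(α'+β'))*g0 - (β*(1-α)/(α+β))*g0| ≤ δ⁻¹*(|α - α'| + |β - β'|) + (|α - α'| + |β - β'|) := by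
    rw [show (β'*(1-α')/(α'+β'))*g0 - (β*(1-α)/(α+β))*g0
        = ((β/(α+β))*(1-α) - (β'/(α'+β'))*(1-α'))*(-g0) from by ring, abs_mul, abs_neg]
    have inner : |(β/(α+β))*(1-α) - (β'/(α'+β'))*(1-α')| ≤ δ⁻¹*(|α - α'| + |β - β'|) + (|α - α'| + |β - β'|) := by
      refine (abs_prod2_diff _ _ _ _).trans ?_
      have h1 : |1-α| ≤ 1 := by rw [abs_of_nonneg (by linarith)]; linarith
      have h3 : |(1-α)-(1-α')| ≤ (|α - α'| + |β - β'|) := by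
        rw [show (1-α)-(1-α') = -(α-α') from by ring, abs_neg]; exact hαd
      have habsp' : |(β'/(α'+β'))| ≤ 1 := by rw [abs_of_nonneg hp0']; exact hp1'
      calc |(β/(α+β)) - (β'/(α'+β'))| * |1-α| + |(β'/(α'+β'))| * |(1-α)-(1-α')|
          ≤ (δ⁻¹*(|α - α'| + |β - β'|))*1 + 1*(|α - α'| + |β - β'|) := add_le_add
            (mul2_le hpd h1 (abs_nonneg _) (abs_nonneg _))
            (mul2_le habsp' h3 (abs_nonneg _) (abs_nonneg _))
        _ = δ⁻¹*(|α - α'| + |β - β'|) + (|α - α'| + |β - β'|) := by ring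
    calc |(β/(α+β))*(1-α) - (β'/(α'+β'))*(1-α')| * |g0| ≤ (δ⁻¹*(|α - α'| + |β - β'|) + (|α - α'| + |β - β'|))*1 :=
          mul2_le inner habsg0 (abs_nonneg _) (abs_nonneg _)
      _ = δ⁻¹*(|α - α'| + |β - β'|) + (|α - α'| + |β - β'|) := mul_one _
  have hT2 : |β'*u*(t - (β'/(α'+β'))*v) - β*u*(t - (β/(α+β))*v)| ≤ (|α - α'| + |β - β'|) + δ⁻¹*(|α - α'| + |β - β'|) := by
    refine (abs_prod3_diff _ _ _ _ _ _).trans ?_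
    have hbb : |β' - β| ≤ (|α - α'| + |β - β'|) := by rw [abs_sub_comm]; exact hβd
    have huu : |u - u| ≤ 0 := by simp
    have hccomm : |(t - (β'/(α'+β'))*v) - (t - (β/(α+β))*v)| ≤ δ⁻¹ * (|α - α'| + |β - β'|) := by
      rw [abs_sub_comm]; exact hcvd
    calc |β' - β| * |u| * |t - (β'/(α'+β'))*v| + |β| * |u - u| * |t - (β'/(α'+β'))*v| + |β| * |u| * |(t - (β'/(α'+β'))*v) - (t - (β/(α+β))*v)|
        ≤ (|α - α'| + |β - β'|)*1*1 + 1*0*1 + 1*1*(δ⁻¹*(|α - α'| + |β - β'|)) :=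
          add_le_add (add_le_add
            (mul3_le hbb habsu hcv' (abs_nonneg _) (abs_nonneg _) (abs_nonneg _))
            (mul3_le habsb huu hcv' (abs_nonneg _) (abs_nonneg _) (abs_nonneg _)))
            (mul3_le habsb habsu hccomm (abs_nonneg _) (abs_nonneg _) (abs_nonneg _))
      _ = (|α - α'| + |β - β'|) + δ⁻¹*(|α - α'| + |β - β'|) := by ring
  have hT3 : |β'*(s - (β'/(α'+β'))*u)*v - β*(s - (β/(α+β))*u)*v| ≤ (|α - α'| + |β - β'|) + δ⁻¹*(|α - α'| + |β - β'|) := by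
    refine (abs_prod3_diff _ _ _ _ _ _).trans ?_
    have hbb : |β' - β| ≤ (|α - α'| + |β - β'|) := by rw [abs_sub_comm]; exact hβd
    have hvv : |v - v| ≤ 0 := by simp
    have hccomm : |(s - (β'/(α'+β'))*u) - (s - (β/(α+β))*u)| ≤ δ⁻¹ * (|α - α'| + |β - β'|) := by
      rw [abs_sub_comm]; exact hcud
    calc |β' - β| * |s - (β'/(α'+β'))*u| * |v| + |β| * |(s - (β'/(α'+β'))*u) - (s - (β/(α+β))*u)| * |v| + |β| * |s - (β/(α+β))*u| * |v - v|
        ≤ (|α - α'| + |β - β'|)*1*1 + 1*(δ⁻¹*(|α - α'| + |β - β'|))*1 + 1*1*0 :=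
          add_le_add (add_le_add
            (mul3_le hbb hcu' habsv (abs_nonneg _) (abs_nonneg _) (abs_nonneg _))
            (mul3_le habsb hccomm habsv (abs_nonneg _) (abs_nonneg _) (abs_nonneg _)))
            (mul3_le habsb hcu hvv (abs_nonneg _) (abs_nonneg _) (abs_nonneg _))
      _ = (|α - α'| + |β - β'|) + δ⁻¹*(|α - α'| + |β - β'|) := by ring
  have hT4 : |(1-β')*(s + (β'/α')*(s-u))*(t - (β'/(α'+β'))*v) - (1-β)*(s + (β/α)*(s-u))*(t - (β/(α+β))*v)|
      ≤ δ⁻¹*(|α - α'| + |β - β'|) + δ⁻¹^2*(|α - α'| + |β - β'|) + δ⁻¹^2*(|α - α'| + |β - β'|) := by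
    refine (abs_prod3_diff _ _ _ _ _ _).trans ?_
    have hbb : |(1-β') - (1-β)| ≤ (|α - α'| + |β - β'|) := by
      rw [show (1-β') - (1-β) = β - β' from by ring]; exact hβd
    have hFdc : |(s + (β'/α')*(s-u)) - (s + (β/α)*(s-u))| ≤ δ⁻¹^2 * (|α - α'| + |β - β'|) := by
      rw [abs_sub_comm]; exact hFd
    have hcvdc : |(t - (β'/(α'+β'))*v) - (t - (β/(α+β))*v)| ≤ δ⁻¹ * (|α - α'| + |β - β'|) := by
      rw [abs_sub_comm]; exact hcvd
    calc |(1-β') - (1-β)| * |s + (β'/α')*(s-u)| * |t - (β'/(α'+β'))*v|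
          + |1-β| * |(s + (β'/α')*(s-u)) - (s + (β/α)*(s-u))| * |t - (β'/(α'+β'))*v|
          + |1-β| * |s + (β/α)*(s-u)| * |(t - (β'/(α'+β'))*v) - (t - (β/(α+β))*v)|
        ≤ (|α - α'| + |β - β'|)*δ⁻¹*1 + 1*(δ⁻¹^2*(|α - α'| + |β - β'|))*1 + 1*δ⁻¹*(δ⁻¹*(|α - α'| + |β - β'|)) :=
          add_le_add (add_le_add
            (mul3_le hbb hF' hcv' (abs_nonneg _) (abs_nonneg _) (abs_nonneg _))
            (mul3_le habs1b hFdc hcv' (abs_nonneg _) (abs_nonneg _) (abs_nonneg _)))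
            (mul3_le habs1b hF hcvdc (abs_nonneg _) (abs_nonneg _) (abs_nonneg _))
      _ = δ⁻¹*(|α - α'| + |β - β'|) + δ⁻¹^2*(|α - α'| + |β - β'|) + δ⁻¹^2*(|α - α'| + |β - β'|) := by ring
  -- assemble
  have hsplit : Dexpr α β u v s t g g0 - Dexpr α' β' u v s t g g0 =
      ((β'*(1-α')/(α'+β'))*g0 - (β*(1-α)/(α+β))*g0)
      + (β'*u*(t - (β'/(α'+β'))*v) - β*u*(t - (β/(α+β))*v))
      + (β'*(s - (β'/(α'+β'))*u)*v - β*(s - (β/(α+β))*u)*v)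
      + ((1-β')*(s + (β'/α')*(s-u))*(t - (β'/(α'+β'))*v) - (1-β)*(s + (β/α)*(s-u))*(t - (β/(α+β))*v)) := by
    simp only [Dexpr]; ring
  rw [hsplit]
  have habs4 : ∀ A B C D' : ℝ, |A + B + C + D'| ≤ |A| + |B| + |C| + |D'| := by
    intro A B C D'
    calc |A + B + C + D'| ≤ |A + B + C| + |D'| := abs_add_le _ _
      _ ≤ (|A + B| + |C|) + |D'| := add_le_add_left (abs_add_le _ _) _
      _ ≤ ((|A| + |B|) + |C|) + |D'| := by
          have := abs_add_le A B; linarith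
  refine (habs4 _ _ _ _).trans ?_
  exact aux_final hK hd0 (by linarith [hT1]) hT2 hT3 (by linarith [hT4])

lemma Dexpr_sq_diff {δ α β α' β' u v s t g g0 : ℝ} (hδ0 : 0 < δ) (hδ : δ < 1/2)
    (hαl : δ ≤ α) (hαr : α ≤ 1 - δ) (hβl : δ ≤ β) (hβr : β ≤ 1 - δ)
    (hαl' : δ ≤ α') (hαr' : α' ≤ 1 - δ) (hβl' : δ ≤ β') (hβr' : β' ≤ 1 - δ)
    (hu0 : 0 ≤ u) (hu1 : u ≤ 1) (hv0 : 0 ≤ v) (hv1 : v ≤ 1)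
    (hs0 : 0 ≤ s) (hs1 : s ≤ 1) (ht0 : 0 ≤ t) (ht1 : t ≤ 1)
    (hgl : 0 ≤ g) (hgr : g ≤ 1) (hhl : 0 ≤ g0) (hhr : g0 ≤ 1) :
    |(Dexpr α β u v s t g g0)^2 - (Dexpr α' β' u v s t g g0)^2|
      ≤ 16 * δ⁻¹^4 * (|α - α'| + |β - β'|) := by
  have hK := two_le_inv_delta hδ0 hδ
  have hK0 : (0:ℝ) ≤ δ⁻¹ := by linarith
  have hd0 : (0:ℝ) ≤ |α - α'| + |β - β'| := by positivity
  have h1 := Dexpr_abs_le hδ0 hδ hαl hαr hβl hβr hu0 hu1 hv0 hv1 hs0 hs1 ht0 ht1 hgl hgr hhl hhr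
  have h1' := Dexpr_abs_le hδ0 hδ hαl' hαr' hβl' hβr' hu0 hu1 hv0 hv1 hs0 hs1 ht0 ht1 hgl hgr hhl hhr
  have h2 := Dexpr_lip hδ0 hδ hαl hαr hβl hβr hαl' hαr' hβl' hβr' hu0 hu1 hv0 hv1 hs0 hs1 ht0 ht1 hgl hgr hhl hhr
  have e : (Dexpr α β u v s t g g0)^2 - (Dexpr α' β' u v s t g g0)^2
      = (Dexpr α β u v s t g g0 - Dexpr α' β' u v s t g g0)
        * (Dexpr α β u v s t g g0 + Dexpr α' β' u v s t g g0) := by ring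
  rw [e, abs_mul]
  have hsum : |Dexpr α β u v s t g g0 + Dexpr α' β' u v s t g g0| ≤ 6*δ⁻¹ :=
    (abs_add_le _ _).trans (by linarith)
  calc |Dexpr α β u v s t g g0 - Dexpr α' β' u v s t g g0|
        * |Dexpr α β u v s t g g0 + Dexpr α' β' u v s t g g0|
      ≤ (5 * δ⁻¹^2 * (|α - α'| + |β - β'|)) * (6*δ⁻¹) :=
        mul2_le h2 hsum (abs_nonneg _) (abs_nonneg _)
    _ ≤ 16 * δ⁻¹^4 * (|α - α'| + |β - β'|) := by
        nlinarith [mul_nonneg (mul_nonneg (pow_nonneg hK0 3) hd0) (by linarith : (0:ℝ) ≤ 16*δ⁻¹ - 30)]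

lemma Dexpr_eq (a b u v s t g g0 : ℝ) (ha : a ≠ 0) (hab : a + b ≠ 0) :
    g - ((b*(1-a)/(a+b))*g0 + (a*b/(a+b))*u*((t - (b/(a+b))*v)/(a/(a+b)))
      + (a*b/(a+b))*((s - (b/(a+b))*u)/(a/(a+b)))*v
      + (a*(1-b)/(a+b))*((s - (b/(a+b))*u)/(a/(a+b)))*((t - (b/(a+b))*v)/(a/(a+b))))
    = Dexpr a b u v s t g g0 := by
  rw [Dexpr]
  have h : a/(a+b) ≠ 0 := div_ne_zero ha hab
  field_simp
  ring

/-- Lemma 1 (Lipschitz property of the empirical contrast dₙ):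
    |dₙ(θ) − dₙ(θ')| ≤ 16δ⁻⁴(|α−α'| + |β−β'|). -/
theorem empirical_contrast_lipschitz
    {E : Type*} [MeasurableSpace E] (H : Measure (E × E)) [IsProbabilityMeasure H]
    (δ : ℝ) (hδ0 : 0 < δ) (hδ : δ < 1/2)
    (F0 : E → ℝ) (G0 : E × E → ℝ) (Fhat : E → ℝ) (Ghat : E × E → ℝ)
    (hF0m : Measurable F0) (hG0m : Measurable G0)
    (hFhm : Measurable Fhat) (hGhm : Measurable Ghat)
    (hF0 : ∀ x, F0 x ∈ Set.Icc (0:ℝ) 1)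
    (hFhat : ∀ x, Fhat x ∈ Set.Icc (0:ℝ) 1)
    (hG0 : ∀ z, G0 z ∈ Set.Icc (0:ℝ) 1)
    (hGhat : ∀ z, Ghat z ∈ Set.Icc (0:ℝ) 1)
    (Fh1 : ℝ × ℝ → E → ℝ)
    (hFh1 : ∀ (α β : ℝ) (x : E),
      Fh1 (α, β) x = (Fhat x - (β/(α+β)) * F0 x) / (α/(α+β)))
    (Δn : ℝ × ℝ → E × E → ℝ)
    (hΔn : ∀ (α β : ℝ) (x y : E),
      Δn (α, β) (x, y) = Ghat (x,y) - ((β*(1-α)/(α+β)) * G0 (x,y)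
        + (α*β/(α+β)) * F0 x * Fh1 (α, β) y
        + (α*β/(α+β)) * Fh1 (α, β) x * F0 y
        + (α*(1-β)/(α+β)) * Fh1 (α, β) x * Fh1 (α, β) y))
    (dn : ℝ × ℝ → ℝ)
    (hdn : ∀ θ : ℝ × ℝ, dn θ = ∫ z, (Δn θ z)^2 ∂H) :
    ∀ α β α' β' : ℝ,
      α ∈ Set.Icc δ (1-δ) → β ∈ Set.Icc δ (1-δ) →
      α' ∈ Set.Icc δ (1-δ) → β' ∈ Set.Icc δ (1-δ) →
      |dn (α, β) - dn (α', β')| ≤ 16 * δ⁻¹^4 * (|α - α'| + |β - β'|) := by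
  intro α β α' β' hα hβ hα' hβ'
  obtain ⟨hαl, hαr⟩ := hα
  obtain ⟨hβl, hβr⟩ := hβ
  obtain ⟨hαl', hαr'⟩ := hα'
  obtain ⟨hβl', hβr'⟩ := hβ'
  -- identify Δn with the explicit expression Dexpr
  have hform : ∀ a b : ℝ, δ ≤ a → δ ≤ b → ∀ z : E × E,
      Δn (a, b) z = Dexpr a b (F0 z.1) (F0 z.2) (Fhat z.1) (Fhat z.2) (Ghat z) (G0 z) := by
    intro a b ha hb z
    have ha0 : a ≠ 0 := (lt_of_lt_of_le hδ0 ha).ne'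
    have hab : a + b ≠ 0 := by
      have h1 := lt_of_lt_of_le hδ0 ha
      have h2 := lt_of_lt_of_le hδ0 hb
      exact (by linarith : (0:ℝ) < a + b).ne'
    calc Δn (a, b) z = Δn (a, b) (z.1, z.2) := rfl
      _ = Ghat (z.1, z.2) - ((b*(1-a)/(a+b)) * G0 (z.1, z.2)
            + (a*b/(a+b)) * F0 z.1 * Fh1 (a, b) z.2
            + (a*b/(a+b)) * Fh1 (a, b) z.1 * F0 z.2
            + (a*(1-b)/(a+b)) * Fh1 (a, b) z.1 * Fh1 (a, b) z.2) := hΔn a b z.1 z.2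
      _ = Dexpr a b (F0 z.1) (F0 z.2) (Fhat z.1) (Fhat z.2) (Ghat z) (G0 z) := by
          rw [hFh1 a b z.1, hFh1 a b z.2]
          exact Dexpr_eq a b (F0 z.1) (F0 z.2) (Fhat z.1) (Fhat z.2) (Ghat z) (G0 z) ha0 hab
  -- measurability and integrability
  have hDm : ∀ a b : ℝ, Measurable (fun z : E × E =>
      (Dexpr a b (F0 z.1) (F0 z.2) (Fhat z.1) (Fhat z.2) (Ghat z) (G0 z))^2) := by
    intro a b
    simp only [Dexpr]
    fun_prop
  have hint : ∀ a b : ℝ, δ ≤ a → a ≤ 1-δ → δ ≤ b → b ≤ 1-δ →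
      Integrable (fun z : E × E =>
        (Dexpr a b (F0 z.1) (F0 z.2) (Fhat z.1) (Fhat z.2) (Ghat z) (G0 z))^2) H := by
    intro a b h1 h2 h3 h4
    refine Integrable.mono' (integrable_const ((3*δ⁻¹)^2))
      (hDm a b).aestronglyMeasurable (ae_of_all _ fun z => ?_)
    rw [Real.norm_eq_abs, abs_pow]
    refine pow_le_pow_left₀ (abs_nonneg _) ?_ 2
    exact Dexpr_abs_le hδ0 hδ h1 h2 h3 h4
      (hF0 z.1).1 (hF0 z.1).2 (hF0 z.2).1 (hF0 z.2).2
      (hFhat z.1).1 (hFhat z.1).2 (hFhat z.2).1 (hFhat z.2).2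
      (hGhat z).1 (hGhat z).2 (hG0 z).1 (hG0 z).2
  have hI := hint α β hαl hαr hβl hβr
  have hI' := hint α' β' hαl' hαr' hβl' hβr'
  -- pointwise bound of the squared differences
  have hpt : ∀ z : E × E,
      ‖(Dexpr α β (F0 z.1) (F0 z.2) (Fhat z.1) (Fhat z.2) (Ghat z) (G0 z))^2
        - (Dexpr α' β' (F0 z.1) (F0 z.2) (Fhat z.1) (Fhat z.2) (Ghat z) (G0 z))^2‖
      ≤ 16 * δ⁻¹^4 * (|α - α'| + |β - β'|) := by
    intro z
    rw [Real.norm_eq_abs]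
    exact Dexpr_sq_diff hδ0 hδ hαl hαr hβl hβr hαl' hαr' hβl' hβr'
      (hF0 z.1).1 (hF0 z.1).2 (hF0 z.2).1 (hF0 z.2).2
      (hFhat z.1).1 (hFhat z.1).2 (hFhat z.2).1 (hFhat z.2).2
      (hGhat z).1 (hGhat z).2 (hG0 z).1 (hG0 z).2
  calc |dn (α, β) - dn (α', β')|
      = ‖∫ z, ((Dexpr α β (F0 z.1) (F0 z.2) (Fhat z.1) (Fhat z.2) (Ghat z) (G0 z))^2
          - (Dexpr α' β' (F0 z.1) (F0 z.2) (Fhat z.1) (Fhat z.2) (Ghat z) (G0 z))^2) ∂H‖ := by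
        rw [hdn, hdn]
        simp only [hform α β hαl hβl, hform α' β' hαl' hβl']
        rw [integral_sub hI hI', Real.norm_eq_abs]
    _ ≤ 16 * δ⁻¹^4 * (|α - α'| + |β - β'|) * (H Set.univ).toReal :=
        norm_integral_le_of_norm_le_const (ae_of_all _ hpt)
    _ = 16 * δ⁻¹^4 * (|α - α'| + |β - β'|) := by simp
end

section
/- Assume F⁰, F¹ and F̂ take values in [0,1] (hence F = p*F⁰ + r*F¹ takes values in [0,1]). Then for every θ = (α,β) ∈ Θ = [δ,1−δ]² and all (x,y) ∈ E × E, |Δₙ(θ,x,y) − Δ(θ,x,y)| ≤ |Ĝ(x,y) − G(x,y)| + (1 + 2b/r) (|F̂(x) − F(x)| + |F̂(y) − F(y)|), and 1 + 2b/r ≤ 1 + 2δ⁻¹. -/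
private lemma tri_aux (a b c d : ℝ) : |a - b - c - d| ≤ |a| + |b| + |c| + |d| := by
  have ha := le_abs_self a; have ha' := neg_abs_le a
  have hb := le_abs_self b; have hb' := neg_abs_le b
  have hc := le_abs_self c; have hc' := neg_abs_le c
  have hd := le_abs_self d; have hd' := neg_abs_le d
  rw [abs_le]
  constructor <;> linarith

private lemma deviation_aux (gh g c1 l2 l4 f0x f0y fh1x fh1y f1x f1y ex ey : ℝ)
    (hx : fh1x = f1x + ex) (hy : fh1y = f1y + ey) :
    (gh - (c1 + l2 * f0x * fh1y + l2 * fh1x * f0y + l4 * fh1x * fh1y))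
      - (g - (c1 + l2 * f0x * f1y + l2 * f1x * f0y + l4 * f1x * f1y))
    = (gh - g) - l2 * f0x * ey - l2 * ex * f0y - l4 * (fh1x * ey + ex * f1y) := by
  subst hx hy; ring

/-- Pointwise comparison of the empirical and theoretical deviations:
    |Δₙ(θ,x,y) − Δ(θ,x,y)| ≤ |Ĝ−G|(x,y) + (1+2b/r)(|F̂−F|(x)+|F̂−F|(y)),
    with 1 + 2b/r ≤ 1 + 2δ⁻¹. -/
theorem empirical_vs_true_deviation_bound
    {E : Type*} (δ : ℝ) (hδ0 : 0 < δ) (hδ : δ < 1/2)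
    (F0 F1 : E → ℝ) (G0 : E × E → ℝ) (Fhat : E → ℝ) (Ghat : E × E → ℝ)
    (hF0 : ∀ x, F0 x ∈ Set.Icc (0:ℝ) 1)
    (hF1 : ∀ x, F1 x ∈ Set.Icc (0:ℝ) 1)
    (hFhat : ∀ x, Fhat x ∈ Set.Icc (0:ℝ) 1)
    (αs βs : ℝ) (hαs : αs ∈ Set.Icc δ (1-δ)) (hβs : βs ∈ Set.Icc δ (1-δ))
    (F : E → ℝ) (hF : ∀ x, F x = (βs/(αs+βs)) * F0 x + (αs/(αs+βs)) * F1 x)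
    (G : E × E → ℝ)
    (hG : ∀ x y, G (x,y) = (βs*(1-αs)/(αs+βs)) * G0 (x,y)
        + (αs*βs/(αs+βs)) * F0 x * F1 y
        + (αs*βs/(αs+βs)) * F1 x * F0 y
        + (αs*(1-βs)/(αs+βs)) * F1 x * F1 y)
    (F1θ : ℝ × ℝ → E → ℝ)
    (hF1θ : ∀ (α β : ℝ) (x : E),
      F1θ (α, β) x = (F x - (β/(α+β)) * F0 x) / (α/(α+β)))
    (Δ : ℝ × ℝ → E × E → ℝ)
    (hΔ : ∀ (α β : ℝ) (x y : E),
      Δ (α, β) (x, y) = G (x,y) - ((β*(1-α)/(α+β)) * G0 (x,y)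
        + (α*β/(α+β)) * F0 x * F1θ (α, β) y
        + (α*β/(α+β)) * F1θ (α, β) x * F0 y
        + (α*(1-β)/(α+β)) * F1θ (α, β) x * F1θ (α, β) y))
    (Fh1 : ℝ × ℝ → E → ℝ)
    (hFh1 : ∀ (α β : ℝ) (x : E),
      Fh1 (α, β) x = (Fhat x - (β/(α+β)) * F0 x) / (α/(α+β)))
    (Δn : ℝ × ℝ → E × E → ℝ)
    (hΔn : ∀ (α β : ℝ) (x y : E),
      Δn (α, β) (x, y) = Ghat (x,y) - ((β*(1-α)/(α+β)) * G0 (x,y)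
        + (α*β/(α+β)) * F0 x * Fh1 (α, β) y
        + (α*β/(α+β)) * Fh1 (α, β) x * F0 y
        + (α*(1-β)/(α+β)) * Fh1 (α, β) x * Fh1 (α, β) y)) :
    ∀ α β : ℝ, α ∈ Set.Icc δ (1-δ) → β ∈ Set.Icc δ (1-δ) →
      (∀ x y : E,
        |Δn (α, β) (x, y) - Δ (α, β) (x, y)|
          ≤ |Ghat (x,y) - G (x,y)|
            + (1 + 2 * ((1-β) / (α/(α+β)))) * (|Fhat x - F x| + |Fhat y - F y|))
      ∧ 1 + 2 * ((1-β) / (α/(α+β))) ≤ 1 + 2 * δ⁻¹ := by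
  intro α β hα hβ
  obtain ⟨hα1, hα2⟩ := hα
  obtain ⟨hβ1, hβ2⟩ := hβ
  have hα0 : 0 < α := lt_of_lt_of_le hδ0 hα1
  have hβ0 : 0 < β := lt_of_lt_of_le hδ0 hβ1
  have hab : 0 < α + β := by linarith
  have hr : 0 < α / (α + β) := div_pos hα0 hab
  have hβle1 : β ≤ 1 := by linarith
  have h1β : 0 ≤ 1 - β := by linarith
  have hs0 : 0 < αs + βs := by
    have := hαs.1; have := hβs.1; linarith
  have hFmem : ∀ z, F z ∈ Set.Icc (0:ℝ) 1 := by
    intro z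
    have h0 := hF0 z; have h1 := hF1 z
    have hps : 0 ≤ βs / (αs + βs) := div_nonneg (by linarith [hβs.1]) hs0.le
    have hrs : 0 ≤ αs / (αs + βs) := div_nonneg (by linarith [hαs.1]) hs0.le
    have hsum : βs / (αs + βs) + αs / (αs + βs) = 1 := by
      rw [← add_div, add_comm, div_self hs0.ne']
    rw [hF z]
    constructor
    · have := mul_nonneg hps h0.1
      have := mul_nonneg hrs h1.1
      linarith
    · nlinarith [mul_le_mul_of_nonneg_left h0.2 hps, mul_le_mul_of_nonneg_left h1.2 hrs]
  have hKpos : 0 < (α + β) / α := div_pos hab hα0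
  have hpr : 0 ≤ β / (α + β) := div_nonneg hβ0.le hab.le
  have hpr1 : β / (α + β) ≤ 1 := by
    rw [div_le_one hab]; linarith
  have hnumhat : ∀ z, |Fhat z - β / (α + β) * F0 z| ≤ 1 := by
    intro z
    have h0 := hF0 z; have hh := hFhat z
    have ht0 : 0 ≤ β / (α + β) * F0 z := mul_nonneg hpr h0.1
    have ht1 : β / (α + β) * F0 z ≤ 1 := by nlinarith [h0.2]
    rw [abs_le]; constructor <;> [linarith [hh.1]; linarith [hh.2]]
  have hnumF : ∀ z, |F z - β / (α + β) * F0 z| ≤ 1 := by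
    intro z
    have h0 := hF0 z; have hh := hFmem z
    have ht0 : 0 ≤ β / (α + β) * F0 z := mul_nonneg hpr h0.1
    have ht1 : β / (α + β) * F0 z ≤ 1 := by nlinarith [h0.2]
    rw [abs_le]; constructor <;> [linarith [hh.1]; linarith [hh.2]]
  have hrK : α / (α + β) * ((α + β) / α) = 1 := by
    field_simp
  have hFh1b : ∀ z, |Fh1 (α, β) z| ≤ ((α + β) / α) := by
    intro z
    rw [hFh1 α β z, abs_div, abs_of_pos hr, div_le_iff₀ hr]
    calc |Fhat z - β / (α + β) * F0 z| ≤ 1 := hnumhat z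
      _ = ((α + β) / α) * (α / (α + β)) := by rw [mul_comm, hrK]
  have hF1θb : ∀ z, |F1θ (α, β) z| ≤ ((α + β) / α) := by
    intro z
    rw [hF1θ α β z, abs_div, abs_of_pos hr, div_le_iff₀ hr]
    calc |F z - β / (α + β) * F0 z| ≤ 1 := hnumF z
      _ = ((α + β) / α) * (α / (α + β)) := by rw [mul_comm, hrK]
  have hKeq : (1 - β) / (α / (α + β)) = (1 - β) * ((α + β) / α) := by
    rw [div_div_eq_mul_div, mul_div_assoc]
  constructor
  · intro x y
    have hex : ∀ z, Fh1 (α, β) z = F1θ (α, β) z + (Fhat z - F z) * ((α + β) / α) := by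
      intro z
      rw [hFh1 α β z, hF1θ α β z]
      field_simp
      ring
    have hident : Δn (α, β) (x, y) - Δ (α, β) (x, y)
        = (Ghat (x, y) - G (x, y))
          - α * β / (α + β) * F0 x * ((Fhat y - F y) * ((α + β) / α))
          - α * β / (α + β) * ((Fhat x - F x) * ((α + β) / α)) * F0 y
          - α * (1 - β) / (α + β) *
              (Fh1 (α, β) x * ((Fhat y - F y) * ((α + β) / α)) + ((Fhat x - F x) * ((α + β) / α)) * F1θ (α, β) y) := by
      rw [hΔn α β x y, hΔ α β x y]
      exact deviation_aux _ _ _ _ _ _ _ _ _ _ _ _ _ (hex x) (hex y)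
    have h0x : |F0 x| ≤ 1 := abs_le.mpr ⟨by linarith [(hF0 x).1], (hF0 x).2⟩
    have h0y : |F0 y| ≤ 1 := abs_le.mpr ⟨by linarith [(hF0 y).1], (hF0 y).2⟩
    have h2 : |α * β / (α + β) * F0 x * ((Fhat y - F y) * ((α + β) / α))| ≤ |Fhat y - F y| := by
      have he : α * β / (α + β) * F0 x * ((Fhat y - F y) * ((α + β) / α)) = β * F0 x * (Fhat y - F y) := by
        field_simp
      rw [he, abs_mul, abs_mul, abs_of_pos hβ0]
      exact mul_le_of_le_one_left (abs_nonneg _)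
        (mul_le_one₀ hβle1 (abs_nonneg _) h0x)
    have h3 : |α * β / (α + β) * ((Fhat x - F x) * ((α + β) / α)) * F0 y| ≤ |Fhat x - F x| := by
      have he : α * β / (α + β) * ((Fhat x - F x) * ((α + β) / α)) * F0 y = β * F0 y * (Fhat x - F x) := by
        field_simp
      rw [he, abs_mul, abs_mul, abs_of_pos hβ0]
      exact mul_le_of_le_one_left (abs_nonneg _)
        (mul_le_one₀ hβle1 (abs_nonneg _) h0y)
    have h4 : |α * (1 - β) / (α + β) *
        (Fh1 (α, β) x * ((Fhat y - F y) * ((α + β) / α)) + ((Fhat x - F x) * ((α + β) / α)) * F1θ (α, β) y)|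
        ≤ (1 - β) * ((α + β) / α) * (|Fhat x - F x| + |Fhat y - F y|) := by
      have hcabs : |α * (1 - β) / (α + β)| = (1 - β) * (α / (α + β)) := by
        have he : α * (1 - β) / (α + β) = (1 - β) * (α / (α + β)) := by ring
        rw [he, abs_mul, abs_of_nonneg h1β, abs_of_pos hr]
      rw [abs_mul, hcabs]
      have hin : |Fh1 (α, β) x * ((Fhat y - F y) * ((α + β) / α)) + ((Fhat x - F x) * ((α + β) / α)) * F1θ (α, β) y|
          ≤ ((α + β) / α) * (|Fhat y - F y| * ((α + β) / α)) + (|Fhat x - F x| * ((α + β) / α)) * ((α + β) / α) := by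
        refine (abs_add_le _ _).trans ?_
        gcongr
        · rw [abs_mul, abs_mul, abs_of_pos hKpos]
          exact mul_le_mul_of_nonneg_right (hFh1b x) (by positivity)
        · rw [abs_mul, abs_mul, abs_of_pos hKpos]
          exact mul_le_mul_of_nonneg_left (hF1θb y) (by positivity)
      calc (1 - β) * (α / (α + β)) *
            |Fh1 (α, β) x * ((Fhat y - F y) * ((α + β) / α)) + ((Fhat x - F x) * ((α + β) / α)) * F1θ (α, β) y|
          ≤ (1 - β) * (α / (α + β)) * (((α + β) / α) * (|Fhat y - F y| * ((α + β) / α)) + (|Fhat x - F x| * ((α + β) / α)) * ((α + β) / α)) := by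
            apply mul_le_mul_of_nonneg_left hin
            positivity
        _ = (1 - β) * ((α + β) / α) * (|Fhat x - F x| + |Fhat y - F y|) := by
            field_simp; ring
    have htri : |Δn (α, β) (x, y) - Δ (α, β) (x, y)|
        ≤ |Ghat (x, y) - G (x, y)|
          + |α * β / (α + β) * F0 x * ((Fhat y - F y) * ((α + β) / α))|
          + |α * β / (α + β) * ((Fhat x - F x) * ((α + β) / α)) * F0 y|
          + |α * (1 - β) / (α + β) *
              (Fh1 (α, β) x * ((Fhat y - F y) * ((α + β) / α)) + ((Fhat x - F x) * ((α + β) / α)) * F1θ (α, β) y)| := by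
      rw [hident]
      exact tri_aux _ _ _ _
    rw [hKeq]
    have hnn : 0 ≤ (1 - β) * ((α + β) / α) * (|Fhat x - F x| + |Fhat y - F y|) := by positivity
    have hexp : (1 + 2 * ((1 - β) * ((α + β) / α))) * (|Fhat x - F x| + |Fhat y - F y|)
        = |Fhat x - F x| + |Fhat y - F y| + 2 * ((1 - β) * ((α + β) / α) * (|Fhat x - F x| + |Fhat y - F y|)) := by ring
    linarith [htri, h2, h3, h4, hnn]
  · rw [hKeq]
    have ha : 0 ≤ (1 - β) * (β * (α - δ)) :=
      mul_nonneg h1β (mul_nonneg hβ0.le (by linarith))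
    have hb : α * ((1 - β) * (δ + β)) ≤ α := by
      have h1 : (1 - β) * (δ + β) ≤ 1 := by nlinarith [sq_nonneg (2 * β - (1 - δ))]
      nlinarith [mul_le_mul_of_nonneg_left h1 hα0.le]
    have hkey : (1 - β) * ((α + β) / α) ≤ δ⁻¹ := by
      rw [mul_div_assoc', div_le_iff₀ hα0, inv_mul_eq_div, le_div_iff₀ hδ0]
      have hid : (1 - β) * (α + β) * δ
          = α * ((1 - β) * (δ + β)) - (1 - β) * (β * (α - δ)) := by ring
      linarith [ha, hb, hid]
    exact add_le_add le_rfl (mul_le_mul_of_nonneg_left hkey (by norm_num))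
end

section
/- Let 0 < δ < 1/2, let (α̂,β̂) and (α*,β*) belong to [δ,1−δ]², and let F⁰, F̂ : E → ℝ take values in [0,1]. With p̂ = β̂/(α̂+β̂), r̂ = α̂/(α̂+β̂), p* = β*/(α*+β*), r* = α*/(α*+β*), F̂¹ = (F̂ − p̂F⁰)/r̂ and F¹ = (F − p*F⁰)/r* for an arbitrary function F : E → ℝ, one has sup_{x ∈ E} |F̂¹(x) − F¹(x)| ≤ (1/r*)·sup_{x ∈ E} |F̂(x) − F(x)| + (√2/δ²)·√((α̂−α*)² + (β̂−β*)²). In particular |β̂/α̂ − β*/α*| ≤ (√2/δ²)·√((α̂−α*)² + (β̂−β*)²). -/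
private lemma abs_add_le_sqrt_two (a b : ℝ) :
    |a| + |b| ≤ Real.sqrt 2 * Real.sqrt (a^2 + b^2) := by
  rw [← Real.sqrt_mul (by norm_num)]
  have h1 : |a| + |b| = Real.sqrt ((|a| + |b|)^2) := by
    rw [Real.sqrt_sq (by positivity)]
  rw [h1]
  apply Real.sqrt_le_sqrt
  have := abs_nonneg a; have := abs_nonneg b
  nlinarith [sq_nonneg (|a| - |b|), sq_abs a, sq_abs b]

/-- Sup-norm bound for the plug-in estimator of F¹:
    ‖F̂¹ − F¹‖∞ ≤ (1/r*)‖F̂ − F‖∞ + (√2/δ²)‖θ̂ − θ*‖, and the parametric part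
    |β̂/α̂ − β*/α*| ≤ (√2/δ²)‖θ̂ − θ*‖. -/
theorem plugin_estimator_sup_bound
    {E : Type*} (δ : ℝ) (hδ0 : 0 < δ) (hδ : δ < 1/2)
    (αh βh αs βs : ℝ)
    (hαh : αh ∈ Set.Icc δ (1-δ)) (hβh : βh ∈ Set.Icc δ (1-δ))
    (hαs : αs ∈ Set.Icc δ (1-δ)) (hβs : βs ∈ Set.Icc δ (1-δ))
    (F0 Fhat : E → ℝ)
    (hF0 : ∀ x, F0 x ∈ Set.Icc (0:ℝ) 1)
    (hFhat : ∀ x, Fhat x ∈ Set.Icc (0:ℝ) 1)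
    (F : E → ℝ)
    (ph rh ps rs : ℝ)
    (hph : ph = βh/(αh+βh)) (hrh : rh = αh/(αh+βh))
    (hps : ps = βs/(αs+βs)) (hrs : rs = αs/(αs+βs))
    (Fh1 F1 : E → ℝ)
    (hFh1 : ∀ x, Fh1 x = (Fhat x - ph * F0 x)/rh)
    (hF1 : ∀ x, F1 x = (F x - ps * F0 x)/rs) :
    (⨆ x : E, |Fh1 x - F1 x|)
      ≤ (1/rs) * (⨆ x : E, |Fhat x - F x|)
        + (Real.sqrt 2 / δ^2) * Real.sqrt ((αh - αs)^2 + (βh - βs)^2)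
    ∧ |βh/αh - βs/αs|
      ≤ (Real.sqrt 2 / δ^2) * Real.sqrt ((αh - αs)^2 + (βh - βs)^2) := by
  obtain ⟨hαh1, hαh2⟩ := hαh
  obtain ⟨hβh1, hβh2⟩ := hβh
  obtain ⟨hαs1, hαs2⟩ := hαs
  obtain ⟨hβs1, hβs2⟩ := hβs
  have hαh0 : 0 < αh := lt_of_lt_of_le hδ0 hαh1
  have hβh0 : 0 < βh := lt_of_lt_of_le hδ0 hβh1
  have hαs0 : 0 < αs := lt_of_lt_of_le hδ0 hαs1
  have hβs0 : 0 < βs := lt_of_lt_of_le hδ0 hβs1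
  have hsh : 0 < αh + βh := by linarith
  have hss : 0 < αs + βs := by linarith
  have hrh0 : 0 < rh := by rw [hrh]; positivity
  have hrs0 : 0 < rs := by rw [hrs]; positivity
  set c : ℝ := βh/αh - βs/αs with hc
  -- scalar bound
  have hcbound : |c| ≤ (Real.sqrt 2 / δ^2) * Real.sqrt ((αh - αs)^2 + (βh - βs)^2) := by
    have hceq : c = (αs*(βh - βs) - βs*(αh - αs))/(αh*αs) := by
      rw [hc]; field_simp; ring
    have hnum : |αs*(βh - βs) - βs*(αh - αs)| ≤ |βh - βs| + |αh - αs| := by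
      calc |αs*(βh - βs) - βs*(αh - αs)|
          ≤ |αs*(βh - βs)| + |βs*(αh - αs)| := abs_sub _ _
        _ = αs * |βh - βs| + βs * |αh - αs| := by
            rw [abs_mul, abs_mul, abs_of_pos hαs0, abs_of_pos hβs0]
        _ ≤ 1 * |βh - βs| + 1 * |αh - αs| := by
            have := abs_nonneg (βh - βs); have := abs_nonneg (αh - αs)
            have : αs ≤ 1 := by linarith
            have : βs ≤ 1 := by linarith
            gcongr
        _ = |βh - βs| + |αh - αs| := by ring
    have hden : δ^2 ≤ αh * αs := by nlinarith
    have hδ2 : (0:ℝ) < δ^2 := by positivity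
    calc |c| = |αs*(βh - βs) - βs*(αh - αs)| / (αh*αs) := by
            rw [hceq, abs_div, abs_of_pos (by positivity : (0:ℝ) < αh*αs)]
      _ ≤ (|βh - βs| + |αh - αs|) / δ^2 := by
            apply div_le_div₀ (by positivity) hnum hδ2 hden
      _ ≤ Real.sqrt 2 * Real.sqrt ((αh - αs)^2 + (βh - βs)^2) / δ^2 := by
            gcongr
            have := abs_add_le_sqrt_two (αh - αs) (βh - βs)
            linarith
      _ = (Real.sqrt 2 / δ^2) * Real.sqrt ((αh - αs)^2 + (βh - βs)^2) := by ring
  refine ⟨?_, hcbound⟩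
  -- key pointwise identity
  have key : ∀ x, Fh1 x - F1 x = (Fhat x - F x)/rs + c * (Fhat x - F0 x) := by
    intro x
    rw [hFh1, hF1, hc, hph, hrh, hps, hrs]
    field_simp
    ring
  -- pointwise bound
  have hpt : ∀ x, |Fh1 x - F1 x| ≤ (1/rs) * |Fhat x - F x| + |c| := by
    intro x
    rw [key x]
    calc |(Fhat x - F x)/rs + c * (Fhat x - F0 x)|
        ≤ |(Fhat x - F x)/rs| + |c * (Fhat x - F0 x)| := abs_add_le _ _
      _ = (1/rs) * |Fhat x - F x| + |c| * |Fhat x - F0 x| := by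
          rw [abs_div, abs_of_pos hrs0, abs_mul]; ring
      _ ≤ (1/rs) * |Fhat x - F x| + |c| * 1 := by
          gcongr
          have h1 := (hFhat x).1; have h2 := (hFhat x).2
          have h3 := (hF0 x).1; have h4 := (hF0 x).2
          rw [abs_le]; constructor <;> linarith
      _ = (1/rs) * |Fhat x - F x| + |c| := by ring
  have hCnn : 0 ≤ (Real.sqrt 2 / δ^2) * Real.sqrt ((αh - αs)^2 + (βh - βs)^2) := by
    positivity
  cases isEmpty_or_nonempty E with
  | inl h =>
      rw [Real.iSup_of_isEmpty, Real.iSup_of_isEmpty]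
      simpa using hCnn
  | inr h =>
      by_cases hbdd : BddAbove (Set.range fun x => |Fhat x - F x|)
      · apply ciSup_le
        intro x
        have h1 := hpt x
        have h2 : |Fhat x - F x| ≤ ⨆ y, |Fhat y - F y| := le_ciSup hbdd x
        have h3 : (1/rs) * |Fhat x - F x| ≤ (1/rs) * ⨆ y, |Fhat y - F y| := by
          apply mul_le_mul_of_nonneg_left h2 (by positivity)
        linarith [hcbound]
      · have hbdd2 : ¬ BddAbove (Set.range fun x => |Fh1 x - F1 x|) := by
          intro ⟨M, hM⟩
          apply hbdd
          refine ⟨rs * M + rs * |c|, ?_⟩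
          rintro y ⟨x, rfl⟩
          have h1 : |Fh1 x - F1 x| ≤ M := hM ⟨x, rfl⟩
          have h2 : Fhat x - F x = rs * (Fh1 x - F1 x) - rs * c * (Fhat x - F0 x) := by
            have := key x
            field_simp at this ⊢
            linarith [this]
          have h3 : |Fhat x - F x| ≤ rs * |Fh1 x - F1 x| + rs * |c| * |Fhat x - F0 x| := by
            rw [h2]
            calc |rs * (Fh1 x - F1 x) - rs * c * (Fhat x - F0 x)|
                ≤ |rs * (Fh1 x - F1 x)| + |rs * c * (Fhat x - F0 x)| := abs_sub _ _
              _ = rs * |Fh1 x - F1 x| + rs * |c| * |Fhat x - F0 x| := by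
                  rw [abs_mul, abs_mul, abs_mul, abs_of_pos hrs0]
          have h4 : |Fhat x - F0 x| ≤ 1 := by
            have h1 := (hFhat x).1; have h2 := (hFhat x).2
            have h3 := (hF0 x).1; have h4 := (hF0 x).2
            rw [abs_le]; constructor <;> linarith
          have h5 : rs * |Fh1 x - F1 x| ≤ rs * M :=
            mul_le_mul_of_nonneg_left h1 hrs0.le
          have h6 : rs * |c| * |Fhat x - F0 x| ≤ rs * |c| * 1 :=
            mul_le_mul_of_nonneg_left h4 (by positivity)
          simp only []
          linarith
        rw [Real.iSup_of_not_bddAbove hbdd, Real.iSup_of_not_bddAbove hbdd2]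
        simpa using hCnn
end

section
/- Let (S, 𝓢, H) be a probability space on a product set E × E, let F, F̂, F⁰ : E → ℝ be bounded measurable, G, Ĝ : E × E → ℝ bounded measurable, T₁ : E × E → ℝ bounded measurable, and n > 0. Define 𝔽 = √n(F̂−F), 𝔾 = √n(Ĝ−G), T₂ = (F−F⁰)⊗(F−F⁰), T̂₂ = (F̂−F⁰)⊗(F̂−F⁰), T₃ = G−F⊗F, T̂₃ = Ĝ−F̂⊗F̂, and for v = (v₁,v₂) ∈ ℝ² let D₁(v) = 2∫T₁(v₁T₁+v₂T₂+T₃)dH and D̂₁(v) = 2∫T₁(v₁T₁+v₂T̂₂+T̂₃)dH be the first coordinates of the gradients of the two quadratic contrasts. Then for every v ∈ ℝ²: √n·(D₁(v) − D̂₁(v)) = 2∫( −T₁𝔾 + T₁(A_v⊗𝔽 + 𝔽⊗A_v) )dH + (2(1−v₂)/√n)·∫ T₁·(𝔽⊗𝔽) dH, where A_v = v₂(F⁰−F) + F. -/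
open MeasureTheory

private lemma int_of_bdd {α : Type*} [MeasurableSpace α] (μ : Measure α)
    [IsFiniteMeasure μ] {f : α → ℝ} (hf : Measurable f) {M : ℝ}
    (hM : ∀ z, |f z| ≤ M) : Integrable f μ := by
  refine (integrable_const M).mono' hf.aestronglyMeasurable (ae_of_all _ fun z => ?_)
  simpa [Real.norm_eq_abs] using hM z

/-- Exact algebraic expansion of the first coordinate of the gradient
    difference √n(∇𝚍 − ∇𝚍ₙ) used in the asymptotic normality proof. -/
theorem gradient_difference_first_coordinate
    {E : Type*} [MeasurableSpace E] (H : Measure (E × E)) [IsProbabilityMeasure H]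
    (n : ℝ) (hn : 0 < n)
    (F Fhat F0 : E → ℝ) (G Ghat : E × E → ℝ) (T1 : E × E → ℝ)
    (hFm : Measurable F) (hFhm : Measurable Fhat) (hF0m : Measurable F0)
    (hGm : Measurable G) (hGhm : Measurable Ghat) (hT1m : Measurable T1)
    (C : ℝ)
    (hFb : ∀ x, |F x| ≤ C) (hFhb : ∀ x, |Fhat x| ≤ C) (hF0b : ∀ x, |F0 x| ≤ C)
    (hGb : ∀ z, |G z| ≤ C) (hGhb : ∀ z, |Ghat z| ≤ C) (hT1b : ∀ z, |T1 z| ≤ C)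
    (Fn : E → ℝ) (hFn : ∀ x, Fn x = Real.sqrt n * (Fhat x - F x))
    (Gn : E × E → ℝ) (hGn : ∀ z, Gn z = Real.sqrt n * (Ghat z - G z))
    (T2 T2hat T3 T3hat : E × E → ℝ)
    (hT2 : ∀ z : E × E, T2 z = (F z.1 - F0 z.1) * (F z.2 - F0 z.2))
    (hT2h : ∀ z : E × E, T2hat z = (Fhat z.1 - F0 z.1) * (Fhat z.2 - F0 z.2))
    (hT3 : ∀ z : E × E, T3 z = G z - F z.1 * F z.2)
    (hT3h : ∀ z : E × E, T3hat z = Ghat z - Fhat z.1 * Fhat z.2)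
    (D1 D1hat : ℝ × ℝ → ℝ)
    (hD1 : ∀ v : ℝ × ℝ, D1 v = 2 * ∫ z, T1 z * (v.1 * T1 z + v.2 * T2 z + T3 z) ∂H)
    (hD1h : ∀ v : ℝ × ℝ,
      D1hat v = 2 * ∫ z, T1 z * (v.1 * T1 z + v.2 * T2hat z + T3hat z) ∂H)
    (A : ℝ × ℝ → E → ℝ)
    (hA : ∀ (v : ℝ × ℝ) (x : E), A v x = v.2 * (F0 x - F x) + F x) :
    ∀ v : ℝ × ℝ, Real.sqrt n * (D1 v - D1hat v) =
      2 * (∫ z, (- (T1 z * Gn z)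
            + T1 z * (A v z.1 * Fn z.2 + Fn z.1 * A v z.2)) ∂H)
      + (2 * (1 - v.2) / Real.sqrt n) * ∫ z, T1 z * (Fn z.1 * Fn z.2) ∂H := by
  intro v
  set s : ℝ := Real.sqrt n with hsdef
  have hs : s ≠ 0 := ne_of_gt (Real.sqrt_pos.mpr hn)
  -- measurability of derived functions
  have hFnm : Measurable Fn := by
    have : Fn = fun x => s * (Fhat x - F x) := funext hFn
    rw [this]; exact (hFhm.sub hFm).const_mul s
  have hGnm : Measurable Gn := by
    have : Gn = fun z => s * (Ghat z - G z) := funext hGn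
    rw [this]; exact (hGhm.sub hGm).const_mul s
  have hAm : Measurable (A v) := by
    have : A v = fun x => v.2 * (F0 x - F x) + F x := funext (hA v)
    rw [this]; exact ((hF0m.sub hFm).const_mul v.2).add hFm
  -- boundedness of derived functions
  have hFnb : ∀ x, |Fn x| ≤ s * (C + C) := by
    intro x; rw [hFn x, abs_mul, abs_of_nonneg (Real.sqrt_nonneg n)]
    refine mul_le_mul_of_nonneg_left ?_ (Real.sqrt_nonneg n)
    exact (abs_sub _ _).trans (add_le_add (hFhb x) (hFb x))
  have hGnb : ∀ z, |Gn z| ≤ s * (C + C) := by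
    intro z; rw [hGn z, abs_mul, abs_of_nonneg (Real.sqrt_nonneg n)]
    refine mul_le_mul_of_nonneg_left ?_ (Real.sqrt_nonneg n)
    exact (abs_sub _ _).trans (add_le_add (hGhb z) (hGb z))
  have hAb : ∀ x, |A v x| ≤ |v.2| * (C + C) + C := by
    intro x; rw [hA v x]
    refine (abs_add_le _ _).trans (add_le_add ?_ (hFb x))
    rw [abs_mul]
    exact mul_le_mul_of_nonneg_left ((abs_sub _ _).trans (add_le_add (hF0b x) (hFb x)))
      (abs_nonneg _)
  -- basic integrable building blocks
  have intT1 : Integrable T1 H := int_of_bdd H hT1m hT1b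
  have intG : Integrable G H := int_of_bdd H hGm hGb
  have intGh : Integrable Ghat H := int_of_bdd H hGhm hGhb
  have intT2 : Integrable T2 H := by
    rw [funext hT2]
    exact Integrable.bdd_mul
      (int_of_bdd H ((hFm.comp measurable_snd).sub (hF0m.comp measurable_snd))
        (fun z => (abs_sub _ _).trans (add_le_add (hFb z.2) (hF0b z.2))))
      ((hFm.comp measurable_fst).sub (hF0m.comp measurable_fst)).aestronglyMeasurable
      (c := C + C) (ae_of_all _ fun z => by
        simpa [Real.norm_eq_abs] using (abs_sub _ _).trans (add_le_add (hFb z.1) (hF0b z.1)))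
  have intT2h : Integrable T2hat H := by
    rw [funext hT2h]
    exact Integrable.bdd_mul
      (int_of_bdd H ((hFhm.comp measurable_snd).sub (hF0m.comp measurable_snd))
        (fun z => (abs_sub _ _).trans (add_le_add (hFhb z.2) (hF0b z.2))))
      ((hFhm.comp measurable_fst).sub (hF0m.comp measurable_fst)).aestronglyMeasurable
      (c := C + C) (ae_of_all _ fun z => by
        simpa [Real.norm_eq_abs] using (abs_sub _ _).trans (add_le_add (hFhb z.1) (hF0b z.1)))
  have intFF : Integrable (fun z : E × E => F z.1 * F z.2) H :=
    Integrable.bdd_mul (int_of_bdd H (hFm.comp measurable_snd) (fun z => hFb z.2))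
      (hFm.comp measurable_fst).aestronglyMeasurable
      (c := C) (ae_of_all _ fun z => by simpa [Real.norm_eq_abs] using hFb z.1)
  have intFFh : Integrable (fun z : E × E => Fhat z.1 * Fhat z.2) H :=
    Integrable.bdd_mul (int_of_bdd H (hFhm.comp measurable_snd) (fun z => hFhb z.2))
      (hFhm.comp measurable_fst).aestronglyMeasurable
      (c := C) (ae_of_all _ fun z => by simpa [Real.norm_eq_abs] using hFhb z.1)
  have intT3 : Integrable T3 H := by
    rw [funext hT3]; exact intG.sub intFF
  have intT3h : Integrable T3hat H := by
    rw [funext hT3h]; exact intGh.sub intFFh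
  have T1bdd : ∀ᵐ z ∂H, ‖T1 z‖ ≤ C :=
    ae_of_all _ fun z => by simpa [Real.norm_eq_abs] using hT1b z
  have I1 : Integrable (fun z => T1 z * (v.1 * T1 z + v.2 * T2 z + T3 z)) H :=
    Integrable.bdd_mul (((intT1.const_mul v.1).add (intT2.const_mul v.2)).add intT3)
      hT1m.aestronglyMeasurable T1bdd
  have I2 : Integrable (fun z => T1 z * (v.1 * T1 z + v.2 * T2hat z + T3hat z)) H :=
    Integrable.bdd_mul (((intT1.const_mul v.1).add (intT2h.const_mul v.2)).add intT3h)
      hT1m.aestronglyMeasurable T1bdd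
  have I3 : Integrable (fun z : E × E =>
      - (T1 z * Gn z) + T1 z * (A v z.1 * Fn z.2 + Fn z.1 * A v z.2)) H := by
    refine Integrable.add (Integrable.neg ?_) (Integrable.bdd_mul ?_
      hT1m.aestronglyMeasurable T1bdd)
    · exact Integrable.bdd_mul (int_of_bdd H hGnm hGnb) hT1m.aestronglyMeasurable T1bdd
    · refine Integrable.add ?_ ?_
      · exact Integrable.bdd_mul (int_of_bdd H (hFnm.comp measurable_snd)
          (fun z => hFnb z.2)) (hAm.comp measurable_fst).aestronglyMeasurable
          (c := |v.2| * (C + C) + C) (ae_of_all _ fun z => by simpa [Real.norm_eq_abs] using hAb z.1)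
      · exact Integrable.bdd_mul (int_of_bdd H (hAm.comp measurable_snd)
          (fun z => hAb z.2)) (hFnm.comp measurable_fst).aestronglyMeasurable
          (c := s * (C + C)) (ae_of_all _ fun z => by simpa [Real.norm_eq_abs] using hFnb z.1)
  have I4 : Integrable (fun z : E × E => T1 z * (Fn z.1 * Fn z.2)) H := by
    refine Integrable.bdd_mul (Integrable.bdd_mul (int_of_bdd H (hFnm.comp measurable_snd)
      (fun z => hFnb z.2)) (hFnm.comp measurable_fst).aestronglyMeasurable
      (c := s * (C + C)) (ae_of_all _ fun z => by simpa [Real.norm_eq_abs] using hFnb z.1))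
      hT1m.aestronglyMeasurable T1bdd
  -- rewrite both sides as single integrals
  rw [hD1 v, hD1h v]
  have lhs_eq : s * (2 * ∫ z, T1 z * (v.1 * T1 z + v.2 * T2 z + T3 z) ∂H
      - 2 * ∫ z, T1 z * (v.1 * T1 z + v.2 * T2hat z + T3hat z) ∂H)
      = ∫ z, s * 2 * (T1 z * (v.1 * T1 z + v.2 * T2 z + T3 z)
          - T1 z * (v.1 * T1 z + v.2 * T2hat z + T3hat z)) ∂H := by
    rw [integral_const_mul, integral_sub I1 I2]; ring
  have rhs_eq : 2 * (∫ z, (- (T1 z * Gn z)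
        + T1 z * (A v z.1 * Fn z.2 + Fn z.1 * A v z.2)) ∂H)
      + (2 * (1 - v.2) / s) * ∫ z, T1 z * (Fn z.1 * Fn z.2) ∂H
      = ∫ z, (2 * (- (T1 z * Gn z) + T1 z * (A v z.1 * Fn z.2 + Fn z.1 * A v z.2))
          + (2 * (1 - v.2) / s) * (T1 z * (Fn z.1 * Fn z.2))) ∂H := by
    rw [integral_add (I3.const_mul 2) (I4.const_mul _), integral_const_mul, integral_const_mul]
  rw [lhs_eq, rhs_eq]
  refine integral_congr_ae (ae_of_all _ fun z => ?_)
  simp only [hT2 z, hT2h z, hT3 z, hT3h z, hGn z, hFn, hA]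
  field_simp
  ring
end
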